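/- arXiv:2602.22504 — 2 statements merged into one kernel-verified Lean document; each statement's English description precedes it below -/
import Mathlib

section
/- Let d_1 = 2n_1+1 and d_2 = 2n_2+1 be odd numbers, d = d_1+d_2-1, and let λ_1, λ_2 be special orthogonal partitions of d_1 and d_2 respectively. Let W = W(λ_1,λ_2) = λ_1+λ_2+ξ be the Waldspurger sequence for the type B data. Then: (i) W is an orthogonal partition of d; (ii) if ν_1 is a C-collapse of (λ_1^t)^−, ν_2 is a C-collapse of (λ_2^t)^−, and ν is a C-collapse of (W^t)^−, then ν_1 ∪ ν_2 ≤ ν in dominance order; (iii) if moreover η is a B-collapse of ((ν_1 ∪ ν_2)^t)^+, then W ≤ η in dominance order. -/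
/-- `f` is a partition of `d`: weakly decreasing, finitely many nonzero terms, total sum `d`.
    Indexing is 0-based: `f j` is the `(j+1)`-st part. -/
def IsPartitionOf (f : ℕ → ℕ) (d : ℕ) : Prop :=
  Antitone f ∧ ∃ N, (∀ j, N ≤ j → f j = 0) ∧ ∑ j ∈ Finset.range N, f j = d

/-- Transpose of a partition (0-based): `ptrans f k` = #{j : f j ≥ k+1}, i.e. `(f^t)_{k+1}`. -/
noncomputable def ptrans (f : ℕ → ℕ) : ℕ → ℕ := fun k => Nat.card {j : ℕ // k + 1 ≤ f j}

/-- Multiplicity of the part `k` in `f` (meaningful for `k > 0`). -/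
noncomputable def pmult (f : ℕ → ℕ) (k : ℕ) : ℕ := Nat.card {j : ℕ // f j = k}

/-- Orthogonal: every even positive part occurs with even multiplicity. -/
def IsOrthogonal (f : ℕ → ℕ) : Prop := ∀ k, 0 < k → Even k → Even (pmult f k)

/-- Symplectic: every odd positive part occurs with even multiplicity. -/
def IsSymplectic (f : ℕ → ℕ) : Prop := ∀ k, 0 < k → Odd k → Even (pmult f k)

/-- Dominance order for ℕ-valued sequences. -/
def NDomLE (f g : ℕ → ℕ) : Prop :=
  ∀ N, ∑ j ∈ Finset.range N, f j ≤ ∑ j ∈ Finset.range N, g j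

/-- Dominance order for ℤ-valued sequences. -/
def DomLE (f g : ℕ → ℤ) : Prop :=
  ∀ N, ∑ j ∈ Finset.range N, f j ≤ ∑ j ∈ Finset.range N, g j

/-- `ν` is the `P`-collapse of `μ` (both of total size `m`): `ν` is a partition of `m`
    satisfying `P`, `ν ≤ μ`, and every partition `σ` of `m` satisfying `P` with `σ ≤ μ`
    satisfies `σ ≤ ν`. -/
def IsCollapse (P : (ℕ → ℕ) → Prop) (m : ℕ) (μ ν : ℕ → ℕ) : Prop :=
  IsPartitionOf ν m ∧ P ν ∧ NDomLE ν μ ∧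
    ∀ σ, IsPartitionOf σ m → P σ → NDomLE σ μ → NDomLE σ ν

/-- B-collapse (largest orthogonal partition below `μ`, `m` odd). -/
def IsBCollapse : ℕ → (ℕ → ℕ) → (ℕ → ℕ) → Prop := IsCollapse IsOrthogonal
/-- C-collapse (largest symplectic partition below `μ`, `m` even). -/
def IsCCollapse : ℕ → (ℕ → ℕ) → (ℕ → ℕ) → Prop := IsCollapse IsSymplectic
/-- D-collapse (largest orthogonal partition below `μ`, `m` even). -/
def IsDCollapse : ℕ → (ℕ → ℕ) → (ℕ → ℕ) → Prop := IsCollapse IsOrthogonal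

/-- `μ^−` : decrease the smallest nonzero part by 1. -/
def minusOne (f : ℕ → ℕ) : ℕ → ℕ :=
  fun j => if 0 < f j ∧ f (j+1) = 0 then f j - 1 else f j

/-- `μ^+` : increase the largest part by 1. -/
def plusOne (f : ℕ → ℕ) : ℕ → ℕ := fun j => if j = 0 then f 0 + 1 else f j

/-- `u = f ∪ g` : `u` is weakly decreasing, finitely supported, and every positive
    part occurs in `u` with multiplicity the sum of its multiplicities in `f` and `g`. -/
def IsUnionOf (u f g : ℕ → ℕ) : Prop :=
  Antitone u ∧ (∃ N, ∀ j, N ≤ j → u j = 0) ∧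
    ∀ k, 0 < k → pmult u k = pmult f k + pmult g k

/-- The sequence ξ attached to `(f, g, ε₁, ε₂, d)`.  Index `j` here corresponds to the
    1-based index `j+1` of the paper. -/
def xiSeq (f g : ℕ → ℕ) (e1 e2 d : ℕ) : ℕ → ℤ := fun j =>
  if (j + 1) % 2 = (d + 1) % 2 ∧ f j % 2 = e1 ∧ g j % 2 = e2 ∧
      (j = 0 ∨ f j + g j < f (j - 1) + g (j - 1)) then 1
  else if (j + 1) % 2 = d % 2 ∧ f j % 2 = e1 ∧ g j % 2 = e2 ∧
      f (j + 1) + g (j + 1) < f j + g j then -1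
  else 0

/-- The Waldspurger sequence `W(f,g) = f + g + ξ` (ℤ-valued a priori). -/
def wald (f g : ℕ → ℕ) (e1 e2 d : ℕ) : ℕ → ℤ :=
  fun j => (f j : ℤ) + (g j : ℤ) + xiSeq f g e1 e2 d j


section Infra

/-- A finite downward-closed set of naturals is an initial segment. -/
lemma mem_iff_lt_ncard {S : Set ℕ} (hfin : S.Finite)
    (hdc : ∀ a b : ℕ, a ≤ b → b ∈ S → a ∈ S) (j : ℕ) :
    j ∈ S ↔ j < S.ncard := by
  constructor
  · intro hj
    have h1 : Set.Iic j ⊆ S := fun a ha => hdc a j ha hj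
    have h2 := Set.ncard_le_ncard h1 hfin
    have h3 : (Set.Iic j).ncard = j + 1 := by
      have : (Set.Iic j) = ↑(Finset.Iic j) := by simp
      rw [this, Set.ncard_coe_finset]
      simp
    omega
  · intro hj
    by_contra hns
    have h1 : S ⊆ Set.Iio j := by
      intro a ha
      simp only [Set.mem_Iio]
      by_contra hle
      exact hns (hdc j a (by omega) ha)
    have h2 := Set.ncard_le_ncard h1 (Set.finite_Iio j)
    have h3 : (Set.Iio j).ncard = j := by
      have : (Set.Iio j) = ↑(Finset.Iio j) := by simp
      rw [this, Set.ncard_coe_finset]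
      simp
    omega

lemma ptrans_eq_ncard (f : ℕ → ℕ) (k : ℕ) :
    ptrans f k = {j : ℕ | k + 1 ≤ f j}.ncard :=
  Nat.card_coe_set_eq {j : ℕ | k + 1 ≤ f j}

lemma pmult_eq_ncard (f : ℕ → ℕ) (k : ℕ) :
    pmult f k = {j : ℕ | f j = k}.ncard :=
  Nat.card_coe_set_eq {j : ℕ | f j = k}

variable {f : ℕ → ℕ} {N : ℕ}

lemma supp_finite (hN : ∀ j, N ≤ j → f j = 0) (k : ℕ) :
    {j : ℕ | k + 1 ≤ f j}.Finite := by
  apply Set.Finite.subset (Set.finite_Iio N)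
  intro j hj
  simp only [Set.mem_setOf_eq] at hj
  simp only [Set.mem_Iio]
  by_contra h
  have := hN j (by omega)
  omega

/-- Key prefix property: for an antitone, finitely supported `f`,
`f j ≥ k+1 ↔ j < ptrans f k`. -/
lemma lt_ptrans_iff (hf : Antitone f) (hN : ∀ j, N ≤ j → f j = 0) (k j : ℕ) :
    k + 1 ≤ f j ↔ j < ptrans f k := by
  rw [ptrans_eq_ncard]
  exact mem_iff_lt_ncard (supp_finite hN k)
    (fun a b hab hb => le_trans hb (hf hab)) j

lemma ptrans_le (hf : Antitone f) (hN : ∀ j, N ≤ j → f j = 0) (k : ℕ) :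
    ptrans f k ≤ N := by
  by_contra h
  have h2 : k + 1 ≤ f N := (lt_ptrans_iff hf hN k N).2 (by omega)
  have := hN N le_rfl
  omega

lemma ptrans_antitone (hf : Antitone f) (hN : ∀ j, N ≤ j → f j = 0) :
    Antitone (ptrans f) := by
  intro a b hab
  by_contra h
  push_neg at h
  -- h : ptrans f a < ptrans f b, so (ptrans f a) < ptrans f b means b+1 ≤ f (ptrans f a)
  have h1 : b + 1 ≤ f (ptrans f a) := (lt_ptrans_iff hf hN b _).2 h
  have h2 : ¬ (a + 1 ≤ f (ptrans f a)) := by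
    rw [lt_ptrans_iff hf hN a]
    omega
  omega

lemma ptrans_supp (hf : Antitone f) (hN : ∀ j, N ≤ j → f j = 0) (k : ℕ) (hk : f 0 ≤ k) :
    ptrans f k = 0 := by
  by_contra h
  have h1 : k + 1 ≤ f 0 := by
    have := (lt_ptrans_iff hf hN k 0).2 (by omega)
    omega
  omega

end Infra

section Sums
open Finset

variable {f : ℕ → ℕ} {N : ℕ}

lemma ncard_Iio (n : ℕ) : (Set.Iio n).ncard = n := by
  have : (Set.Iio n) = ↑(Finset.Iio n) := by simp
  rw [this, Set.ncard_coe_finset]; simp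

lemma setOf_eq_Iio (hf : Antitone f) (hN : ∀ j, N ≤ j → f j = 0) (k : ℕ) :
    {j : ℕ | k + 1 ≤ f j} = Set.Iio (ptrans f k) := by
  ext j
  simp only [Set.mem_setOf_eq, Set.mem_Iio]
  exact lt_ptrans_iff hf hN k j

lemma filter_prefix (hf : Antitone f) (hN : ∀ j, N ≤ j → f j = 0) (k K : ℕ)
    (hK : ptrans f k ≤ K) :
    (Finset.range K).filter (fun j => k + 1 ≤ f j) = Finset.range (ptrans f k) := by
  ext j
  simp only [Finset.mem_filter, Finset.mem_range]
  rw [lt_ptrans_iff hf hN k j]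
  omega

/-- Column sums: `∑_{k<K} (ptrans f) k = ∑_{j<N} min (f j) K`. -/
lemma sum_ptrans (hf : Antitone f) (hN : ∀ j, N ≤ j → f j = 0) (K : ℕ) :
    ∑ k ∈ Finset.range K, ptrans f k = ∑ j ∈ Finset.range N, min (f j) K := by
  have h1 : ∀ k, ptrans f k = ∑ j ∈ Finset.range N, (if k + 1 ≤ f j then 1 else 0) := by
    intro k
    rw [← Finset.card_filter]
    rw [filter_prefix hf hN k N (ptrans_le hf hN k), Finset.card_range]
  calc ∑ k ∈ Finset.range K, ptrans f k
      = ∑ k ∈ Finset.range K, ∑ j ∈ Finset.range N, (if k + 1 ≤ f j then 1 else 0) := by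
        exact Finset.sum_congr rfl (fun k _ => h1 k)
    _ = ∑ j ∈ Finset.range N, ∑ k ∈ Finset.range K, (if k + 1 ≤ f j then 1 else 0) :=
        Finset.sum_comm
    _ = ∑ j ∈ Finset.range N, min (f j) K := by
        apply Finset.sum_congr rfl
        intro j _
        rw [← Finset.card_filter]
        have : (Finset.range K).filter (fun k => k + 1 ≤ f j) = Finset.range (min (f j) K) := by
          ext k
          simp only [Finset.mem_filter, Finset.mem_range, Finset.mem_range, lt_min_iff]
          omega
        rw [this, Finset.card_range]

lemma sum_ptrans_total (hf : Antitone f) (hN : ∀ j, N ≤ j → f j = 0) (K : ℕ)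
    (hK : f 0 ≤ K) :
    ∑ k ∈ Finset.range K, ptrans f k = ∑ j ∈ Finset.range N, f j := by
  rw [sum_ptrans hf hN K]
  apply Finset.sum_congr rfl
  intro j _
  have : f j ≤ f 0 := hf (Nat.zero_le j)
  omega

/-- Transpose is an involution. -/
lemma ptrans_ptrans (hf : Antitone f) (hN : ∀ j, N ≤ j → f j = 0) (j : ℕ) :
    ptrans (ptrans f) j = f j := by
  rw [ptrans_eq_ncard]
  have h1 : {k : ℕ | j + 1 ≤ ptrans f k} = Set.Iio (f j) := by
    ext k
    simp only [Set.mem_setOf_eq, Set.mem_Iio]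
    rw [show (j + 1 ≤ ptrans f k) ↔ (j < ptrans f k) from Iff.rfl,
        ← lt_ptrans_iff hf hN k j]
    omega
  rw [h1, ncard_Iio]

lemma ptrans_partition {m : ℕ} (h : IsPartitionOf f m) : IsPartitionOf (ptrans f) m := by
  obtain ⟨hf, N, hN, hsum⟩ := h
  refine ⟨ptrans_antitone hf hN, f 0, fun k hk => ptrans_supp hf hN k hk, ?_⟩
  rw [sum_ptrans_total hf hN (f 0) le_rfl, hsum]

/-- Upper bound for truncated sums. -/
lemma sum_min_le_split (f : ℕ → ℕ) (M n K : ℕ) (hK : K ≤ M) :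
    ∑ j ∈ Finset.range M, min (f j) n ≤ n * K + ∑ j ∈ Finset.Ico K M, f j := by
  rw [← Finset.sum_range_add_sum_Ico _ hK]
  have h1 : ∑ j ∈ Finset.range K, min (f j) n ≤ n * K := by
    calc ∑ j ∈ Finset.range K, min (f j) n ≤ ∑ _j ∈ Finset.range K, n :=
      Finset.sum_le_sum (fun j _ => min_le_right _ _)
    _ = n * K := by rw [Finset.sum_const, Finset.card_range]; ring
  have h2 : ∑ j ∈ Finset.Ico K M, min (f j) n ≤ ∑ j ∈ Finset.Ico K M, f j :=
    Finset.sum_le_sum (fun j _ => min_le_left _ _)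
  omega

/-- Exact value of truncated sums at the optimal cut `ptrans f n`. -/
lemma sum_min_eq (hf : Antitone f) (hN : ∀ j, N ≤ j → f j = 0) (M n : ℕ)
    (hM : ptrans f n ≤ M) :
    ∑ j ∈ Finset.range M, min (f j) n
      = n * (ptrans f n) + ∑ j ∈ Finset.Ico (ptrans f n) M, f j := by
  rw [← Finset.sum_range_add_sum_Ico _ hM]
  have h1 : ∑ j ∈ Finset.range (ptrans f n), min (f j) n = n * (ptrans f n) := by
    rw [Finset.sum_congr rfl (g := fun _ => n), Finset.sum_const, Finset.card_range]
    · ring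
    · intro j hj
      rw [Finset.mem_range] at hj
      have := (lt_ptrans_iff hf hN n j).2 hj
      omega
  have h2 : ∑ j ∈ Finset.Ico (ptrans f n) M, min (f j) n
      = ∑ j ∈ Finset.Ico (ptrans f n) M, f j := by
    apply Finset.sum_congr rfl
    intro j hj
    rw [Finset.mem_Ico] at hj
    have : ¬ (n + 1 ≤ f j) := by
      rw [lt_ptrans_iff hf hN n j]; omega
    omega
  omega

end Sums

section DomTr
open Finset

/-- Dominance of transposes implies reverse dominance. -/
lemma dom_of_tr_dom {f g : ℕ → ℕ} {m : ℕ}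
    (hfp : IsPartitionOf f m) (hgp : IsPartitionOf g m)
    (h : ∀ K, ∑ k ∈ Finset.range K, ptrans g k ≤ ∑ k ∈ Finset.range K, ptrans f k) :
    ∀ n, ∑ j ∈ Finset.range n, f j ≤ ∑ j ∈ Finset.range n, g j := by
  intro n
  obtain ⟨hf, Nf, hNf, hsf⟩ := hfp
  obtain ⟨hg, Ng, hNg, hsg⟩ := hgp
  set M := max (f 0) (g 0) with hM
  have hMf : ∀ k, M ≤ k → ptrans f k = 0 := fun k hk =>
    ptrans_supp hf hNf k (le_trans (le_max_left _ _) hk)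
  have hMg : ∀ k, M ≤ k → ptrans g k = 0 := fun k hk =>
    ptrans_supp hg hNg k (le_trans (le_max_right _ _) hk)
  have haf : Antitone (ptrans f) := ptrans_antitone hf hNf
  have hag : Antitone (ptrans g) := ptrans_antitone hg hNg
  set K₀ := g n with hK₀
  have hK₀M : K₀ ≤ M := le_trans (hg (Nat.zero_le n)) (le_max_right _ _)
  -- identity for g
  have e1 : ∑ j ∈ Finset.range n, g j = ∑ k ∈ Finset.range M, min (ptrans g k) n := by
    have := sum_ptrans hag hMg n
    rw [← this]
    exact Finset.sum_congr rfl (fun k hk => (ptrans_ptrans hg hNg k).symm)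
  have e2 : ∑ k ∈ Finset.range M, min (ptrans g k) n
      = n * K₀ + ∑ k ∈ Finset.Ico K₀ M, ptrans g k := by
    have := sum_min_eq hag hMg M n (by rw [ptrans_ptrans hg hNg n]; exact hK₀M)
    rw [this, ptrans_ptrans hg hNg n]
  -- bound for f
  have e3 : ∑ j ∈ Finset.range n, f j = ∑ k ∈ Finset.range M, min (ptrans f k) n := by
    have := sum_ptrans haf hMf n
    rw [← this]
    exact Finset.sum_congr rfl (fun k hk => (ptrans_ptrans hf hNf k).symm)
  have e4 : ∑ k ∈ Finset.range M, min (ptrans f k) n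
      ≤ n * K₀ + ∑ k ∈ Finset.Ico K₀ M, ptrans f k := sum_min_le_split _ M n K₀ hK₀M
  -- totals
  have t1 : ∑ k ∈ Finset.range K₀, ptrans f k + ∑ k ∈ Finset.Ico K₀ M, ptrans f k = m := by
    rw [Finset.sum_range_add_sum_Ico _ hK₀M, sum_ptrans_total hf hNf M (le_max_left _ _), hsf]
  have t2 : ∑ k ∈ Finset.range K₀, ptrans g k + ∑ k ∈ Finset.Ico K₀ M, ptrans g k = m := by
    rw [Finset.sum_range_add_sum_Ico _ hK₀M, sum_ptrans_total hg hNg M (le_max_right _ _), hsg]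
  have h5 := h K₀
  omega

/-- Dominance implies reverse dominance of transposes. -/
lemma tr_dom_of_dom {f g : ℕ → ℕ} {m : ℕ}
    (hfp : IsPartitionOf f m) (hgp : IsPartitionOf g m)
    (h : ∀ n, ∑ j ∈ Finset.range n, f j ≤ ∑ j ∈ Finset.range n, g j) :
    ∀ K, ∑ k ∈ Finset.range K, ptrans g k ≤ ∑ k ∈ Finset.range K, ptrans f k := by
  intro K
  obtain ⟨hf, Nf, hNf, hsf⟩ := hfp
  obtain ⟨hg, Ng, hNg, hsg⟩ := hgp
  set M := max Nf Ng with hM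
  have hMf : ∀ j, M ≤ j → f j = 0 := fun j hj => hNf j (le_trans (le_max_left _ _) hj)
  have hMg : ∀ j, M ≤ j → g j = 0 := fun j hj => hNg j (le_trans (le_max_right _ _) hj)
  set K₀ := ptrans f K with hK₀
  have hK₀M : K₀ ≤ M := le_trans (ptrans_le hf hMf K) le_rfl
  have e1 : ∑ k ∈ Finset.range K, ptrans g k = ∑ j ∈ Finset.range M, min (g j) K :=
    sum_ptrans hg hMg K
  have e2 : ∑ j ∈ Finset.range M, min (g j) K ≤ K * K₀ + ∑ j ∈ Finset.Ico K₀ M, g j :=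
    sum_min_le_split _ M K K₀ hK₀M
  have e3 : ∑ k ∈ Finset.range K, ptrans f k = ∑ j ∈ Finset.range M, min (f j) K :=
    sum_ptrans hf hMf K
  have e4 : ∑ j ∈ Finset.range M, min (f j) K
      = K * K₀ + ∑ j ∈ Finset.Ico K₀ M, f j := sum_min_eq hf hMf M K hK₀M
  have t1 : ∑ j ∈ Finset.range K₀, f j + ∑ j ∈ Finset.Ico K₀ M, f j = m := by
    rw [Finset.sum_range_add_sum_Ico _ hK₀M]
    rw [show ∑ j ∈ Finset.range M, f j = ∑ j ∈ Finset.range Nf, f j from ?_, hsf]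
    rcases le_total Nf M with hle | hle
    · rw [← Finset.sum_range_add_sum_Ico _ hle]
      have : ∑ j ∈ Finset.Ico Nf M, f j = 0 := by
        apply Finset.sum_eq_zero
        intro j hj
        rw [Finset.mem_Ico] at hj
        exact hNf j hj.1
      omega
    · have : M = Nf := le_antisymm hle (le_max_left _ _)
      rw [this]
  have t2 : ∑ j ∈ Finset.range K₀, g j + ∑ j ∈ Finset.Ico K₀ M, g j = m := by
    rw [Finset.sum_range_add_sum_Ico _ hK₀M]
    rw [show ∑ j ∈ Finset.range M, g j = ∑ j ∈ Finset.range Ng, g j from ?_, hsg]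
    rcases le_total Ng M with hle | hle
    · rw [← Finset.sum_range_add_sum_Ico _ hle]
      have : ∑ j ∈ Finset.Ico Ng M, g j = 0 := by
        apply Finset.sum_eq_zero
        intro j hj
        rw [Finset.mem_Ico] at hj
        exact hNg j hj.1
      omega
    · have : M = Ng := le_antisymm hle (le_max_right _ _)
      rw [this]
  have h5 := h K₀
  omega

end DomTr

section Pmult
open Finset

variable {f : ℕ → ℕ} {N : ℕ}

lemma sum_ext (hN : ∀ j, N ≤ j → f j = 0) {M : ℕ} (hM : N ≤ M) :
    ∑ j ∈ Finset.range M, f j = ∑ j ∈ Finset.range N, f j := by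
  rw [← Finset.sum_range_add_sum_Ico _ hM]
  have : ∑ j ∈ Finset.Ico N M, f j = 0 := by
    apply Finset.sum_eq_zero
    intro j hj
    rw [Finset.mem_Ico] at hj
    exact hN j hj.1
  omega

lemma ncard_Ico (a b : ℕ) : (Set.Ico a b).ncard = b - a := by
  have : (Set.Ico a b) = ↑(Finset.Ico a b) := by simp
  rw [this, Set.ncard_coe_finset]
  simp

lemma pmult_succ (hf : Antitone f) (hN : ∀ j, N ≤ j → f j = 0) (k : ℕ) :
    pmult f (k+1) = ptrans f k - ptrans f (k+1) := by
  rw [pmult_eq_ncard]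
  have h1 : {j : ℕ | f j = k + 1} = Set.Ico (ptrans f (k+1)) (ptrans f k) := by
    ext j
    simp only [Set.mem_setOf_eq, Set.mem_Ico]
    have e1 := lt_ptrans_iff hf hN k j
    have e2 := lt_ptrans_iff hf hN (k+1) j
    omega
  rw [h1, ncard_Ico]

lemma ptrans_mono_succ (hf : Antitone f) (hN : ∀ j, N ≤ j → f j = 0) (k : ℕ) :
    ptrans f (k+1) ≤ ptrans f k := ptrans_antitone hf hN (Nat.le_succ k)

/-- positions of the maximal part form an initial segment -/
lemma max_mult_prefix (hf : Antitone f) (hN : ∀ j, N ≤ j → f j = 0) (h0 : 0 < f 0) (j : ℕ) :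
    f j = f 0 ↔ j < pmult f (f 0) := by
  rw [pmult_eq_ncard]
  have := mem_iff_lt_ncard (S := {j : ℕ | f j = f 0}) ?_ ?_ j
  · simpa using this
  · apply Set.Finite.subset (Set.finite_Iio N)
    intro a ha
    simp only [Set.mem_setOf_eq] at ha
    simp only [Set.mem_Iio]
    by_contra hle
    have := hN a (by omega)
    omega
  · intro a b hab hb
    simp only [Set.mem_setOf_eq] at *
    have h1 : f b ≤ f a := hf hab
    have h2 : f a ≤ f 0 := hf (Nat.zero_le a)
    omega

end Pmult

section MinusPlus
open Finset

variable {μ : ℕ → ℕ} {N : ℕ}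

lemma minusOne_apply (hμ : Antitone μ) {j0 : ℕ} (h1 : 0 < μ j0) (h2 : μ (j0+1) = 0) :
    ∀ j, minusOne μ j = μ j - (if j = j0 then 1 else 0) := by
  intro j
  unfold minusOne
  rcases eq_or_ne j j0 with rfl | hne
  · simp [h1, h2]
  · have : ¬ (0 < μ j ∧ μ (j+1) = 0) := by
      rintro ⟨ha, hb⟩
      rcases lt_or_gt_of_ne hne with h | h
      · have : μ j0 ≤ μ (j + 1) := hμ (by omega)
        omega
      · have : μ j ≤ μ (j0 + 1) := hμ (by omega)
        omega
    simp [this, hne]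

lemma minusOne_partition {m : ℕ} (hp : IsPartitionOf μ m) {j0 : ℕ}
    (h1 : 0 < μ j0) (h2 : μ (j0+1) = 0) :
    IsPartitionOf (minusOne μ) (m - 1) := by
  obtain ⟨hμ, N, hN, hsum⟩ := hp
  have happ := minusOne_apply hμ h1 h2
  refine ⟨?_, N, ?_, ?_⟩
  · apply antitone_nat_of_succ_le
    intro n
    rw [happ n, happ (n+1)]
    have h3 : μ (n+1) ≤ μ n := hμ (Nat.le_succ n)
    rcases eq_or_ne n j0 with h | h
    · subst h
      rw [if_pos rfl, if_neg (by omega : ¬ n + 1 = n)]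
      omega
    · rcases eq_or_ne (n+1) j0 with h' | h'
      · rw [if_neg h, if_pos h']
        omega
      · rw [if_neg h, if_neg h']
        omega
  · intro j hj
    rw [happ j]
    have := hN j hj
    omega
  · have hj0N : j0 < N := by
      by_contra h
      have := hN j0 (by omega)
      omega
    calc ∑ j ∈ Finset.range N, minusOne μ j
        = ∑ j ∈ Finset.range N, (μ j - if j = j0 then 1 else 0) := by
          exact Finset.sum_congr rfl (fun j _ => happ j)
      _ = m - 1 := by
          have hpt : ∀ j, (μ j - if j = j0 then 1 else 0) + (if j = j0 then 1 else 0) = μ j := by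
            intro j
            split_ifs with h
            · subst h
              omega
            · omega
          have hsum2 : ∑ j ∈ Finset.range N,
              ((μ j - if j = j0 then 1 else 0) + (if j = j0 then 1 else 0)) = m := by
            rw [Finset.sum_congr rfl (fun j _ => hpt j), hsum]
          rw [Finset.sum_add_distrib] at hsum2
          have hite : ∑ j ∈ Finset.range N, (if j = j0 then 1 else 0) = 1 := by
            rw [Finset.sum_ite_eq' (Finset.range N) j0 (fun _ => 1)]
            simp [hj0N]
          omega

lemma ptrans_minusOne (hμ : Antitone μ) (hN : ∀ j, N ≤ j → μ j = 0) {j0 : ℕ}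
    (h1 : 0 < μ j0) (h2 : μ (j0+1) = 0) (k : ℕ) :
    ptrans (minusOne μ) k = ptrans μ k - (if k + 1 = μ j0 then 1 else 0) := by
  have happ := minusOne_apply hμ h1 h2
  rw [ptrans_eq_ncard, ptrans_eq_ncard]
  rcases lt_trichotomy (k+1) (μ j0) with hlt | heq | hgt
  · have : {j : ℕ | k + 1 ≤ minusOne μ j} = {j : ℕ | k + 1 ≤ μ j} := by
      ext j
      simp only [Set.mem_setOf_eq, happ j]
      split_ifs with h
      · subst h; omega
      · omega
    rw [this]
    simp only [if_neg (by omega : ¬ (k+1 = μ j0))]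
    omega
  · have hset : {j : ℕ | k + 1 ≤ minusOne μ j} = {j : ℕ | k + 1 ≤ μ j} \ {j0} := by
      ext j
      simp only [Set.mem_setOf_eq, Set.mem_diff, Set.mem_singleton_iff, happ j]
      split_ifs with h
      · subst h
        omega
      · simp [h]
    rw [hset]
    rw [Set.ncard_diff_singleton_of_mem (s := {j : ℕ | k + 1 ≤ μ j}) (a := j0)
      (by simp only [Set.mem_setOf_eq]; omega)]
    simp only [if_pos heq]
  · have : {j : ℕ | k + 1 ≤ minusOne μ j} = {j : ℕ | k + 1 ≤ μ j} := by
      ext j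
      simp only [Set.mem_setOf_eq, happ j]
      split_ifs with h
      · subst h; omega
      · omega
    rw [this]
    simp only [if_neg (by omega : ¬ (k+1 = μ j0))]
    omega

lemma plusOne_sum (u : ℕ → ℕ) (K : ℕ) :
    ∑ j ∈ Finset.range K, plusOne u j
      = ∑ j ∈ Finset.range K, u j + (if 1 ≤ K then 1 else 0) := by
  rcases Nat.eq_zero_or_pos K with rfl | hK
  · simp
  · obtain ⟨K', rfl⟩ : ∃ K', K = K' + 1 := ⟨K - 1, by omega⟩
    have : ∀ n, ∑ j ∈ Finset.range (n+1), plusOne u j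
        = ∑ j ∈ Finset.range (n+1), u j + 1 := by
      intro n
      induction n with
      | zero => simp [plusOne]
      | succ n ih =>
        rw [Finset.sum_range_succ, Finset.sum_range_succ (f := u), ih]
        have : plusOne u (n+1) = u (n+1) := by unfold plusOne; simp
        omega
    rw [this K']
    simp

end MinusPlus

section Union
open Finset

lemma ptrans_telescope {f : ℕ → ℕ} {N : ℕ} (hf : Antitone f) (hN : ∀ j, N ≤ j → f j = 0)
    (k : ℕ) : ∀ t, ptrans f k = (∑ i ∈ Finset.range t, pmult f (k+1+i)) + ptrans f (k+t) := by
  intro t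
  induction t with
  | zero => simp
  | succ t ih =>
    rw [Finset.sum_range_succ]
    have hidx : k + 1 + t = (k + t) + 1 := by omega
    have h1 : pmult f (k+1+t) = ptrans f (k+t) - ptrans f (k+t+1) := by
      rw [hidx]
      exact pmult_succ hf hN (k+t)
    have h2 : ptrans f (k+t+1) ≤ ptrans f (k+t) := ptrans_mono_succ hf hN (k+t)
    have hidx2 : k + (t+1) = k + t + 1 := by omega
    rw [hidx2]
    omega

lemma ptrans_union {u f g : ℕ → ℕ} {m1 m2 : ℕ} (hu : IsUnionOf u f g)
    (hfp : IsPartitionOf f m1) (hgp : IsPartitionOf g m2) (k : ℕ) :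
    ptrans u k = ptrans f k + ptrans g k := by
  obtain ⟨hua, ⟨Nu, hNu⟩, hmult⟩ := hu
  obtain ⟨hfa, Nf, hNf, _⟩ := hfp
  obtain ⟨hga, Ng, hNg, _⟩ := hgp
  set t := max (u 0) (max (f 0) (g 0)) with ht
  have h1 := ptrans_telescope hua hNu k t
  have h2 := ptrans_telescope hfa hNf k t
  have h3 := ptrans_telescope hga hNg k t
  have z1 : ptrans u (k+t) = 0 := ptrans_supp hua hNu _ (by omega)
  have z2 : ptrans f (k+t) = 0 := ptrans_supp hfa hNf _ (by omega)
  have z3 : ptrans g (k+t) = 0 := ptrans_supp hga hNg _ (by omega)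
  have hsum : ∑ i ∈ Finset.range t, pmult u (k+1+i)
      = ∑ i ∈ Finset.range t, pmult f (k+1+i) + ∑ i ∈ Finset.range t, pmult g (k+1+i) := by
    rw [← Finset.sum_add_distrib]
    exact Finset.sum_congr rfl (fun i _ => hmult (k+1+i) (by omega))
  omega

lemma union_partition {u f g : ℕ → ℕ} {m1 m2 : ℕ} (hu : IsUnionOf u f g)
    (hfp : IsPartitionOf f m1) (hgp : IsPartitionOf g m2) :
    IsPartitionOf u (m1 + m2) := by
  obtain ⟨hua, ⟨Nu, hNu⟩, hmult⟩ := hu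
  refine ⟨hua, Nu, hNu, ?_⟩
  set K := max (u 0) (max (f 0) (g 0)) with hK
  have e1 : ∑ k ∈ Finset.range K, ptrans u k = ∑ j ∈ Finset.range Nu, u j :=
    sum_ptrans_total hua hNu K (by omega)
  have e2 : ∀ k, ptrans u k = ptrans f k + ptrans g k :=
    ptrans_union ⟨hua, ⟨Nu, hNu⟩, hmult⟩ hfp hgp
  obtain ⟨hfa, Nf, hNf, hsf⟩ := hfp
  obtain ⟨hga, Ng, hNg, hsg⟩ := hgp
  have e3 : ∑ k ∈ Finset.range K, ptrans f k = m1 := by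
    rw [sum_ptrans_total hfa hNf K (by omega), hsf]
  have e4 : ∑ k ∈ Finset.range K, ptrans g k = m2 := by
    rw [sum_ptrans_total hga hNg K (by omega), hsg]
  have e5 : ∑ k ∈ Finset.range K, ptrans u k
      = ∑ k ∈ Finset.range K, ptrans f k + ∑ k ∈ Finset.range K, ptrans g k := by
    rw [← Finset.sum_add_distrib]
    exact Finset.sum_congr rfl (fun k _ => e2 k)
  omega

lemma union_symplectic {u f g : ℕ → ℕ} (hu : IsUnionOf u f g)
    (hf : IsSymplectic f) (hg : IsSymplectic g) : IsSymplectic u := by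
  intro k hk hodd
  rw [hu.2.2 k hk]
  exact Even.add (hf k hk hodd) (hg k hk hodd)

end Union

section Parity
open Finset

variable {f : ℕ → ℕ} {N : ℕ}

/-- Prefix sums at even cuts: parity determined by ends. -/
lemma sum_parity_pairs (hp : ∀ i, f (2*i+1) % 2 = f (2*i+2) % 2) :
    ∀ i, (∑ j ∈ Finset.range (2*i+2), f j) % 2 = (f 0 + f (2*i+1)) % 2 := by
  intro i
  induction i with
  | zero =>
    rw [Finset.sum_range_succ, Finset.sum_range_succ]
    simp
  | succ i ih =>
    have hi := hp i
    have e1 : ∑ j ∈ Finset.range (2*i+2+1+1), f j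
        = ∑ j ∈ Finset.range (2*i+2), f j + f (2*i+2) + f (2*i+2+1) := by
      rw [Finset.sum_range_succ, Finset.sum_range_succ]
    have e2 : 2*(i+1)+2 = 2*i+2+1+1 := by ring
    have e3 : 2*(i+1)+1 = 2*i+2+1 := by ring
    rw [e2, e3, e1]
    omega

lemma f0_odd_of_total_odd (hN : ∀ j, N ≤ j → f j = 0)
    (hp : ∀ i, f (2*i+1) % 2 = f (2*i+2) % 2)
    {m : ℕ} (hm : (∑ j ∈ Finset.range N, f j) = m) (hmo : m % 2 = 1) :
    f 0 % 2 = 1 := by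
  have h1 : (∑ j ∈ Finset.range (2*N+2), f j) = m := by
    rw [sum_ext hN (by omega), hm]
  have h2 := sum_parity_pairs hp N
  have h3 : f (2*N+1) = 0 := hN _ (by omega)
  omega

lemma pairing_of_special (hf : Antitone f) (hN : ∀ j, N ≤ j → f j = 0)
    (hs : IsOrthogonal (ptrans f)) :
    ∀ i, f (2*i+1) % 2 = f (2*i+2) % 2 := by
  intro i
  have ha : Antitone (ptrans f) := ptrans_antitone hf hN
  have hsu : ∀ k, f 0 ≤ k → ptrans f k = 0 := fun k hk => ptrans_supp hf hN k hk
  have h1 : pmult (ptrans f) (2*i+1+1) = ptrans (ptrans f) (2*i+1) - ptrans (ptrans f) (2*i+2) := by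
    have := pmult_succ ha hsu (2*i+1)
    rw [this]
  have h2 : ptrans (ptrans f) (2*i+1) = f (2*i+1) := ptrans_ptrans hf hN _
  have h3 : ptrans (ptrans f) (2*i+2) = f (2*i+2) := ptrans_ptrans hf hN _
  have h4 : Even (pmult (ptrans f) (2*i+2)) := hs (2*i+2) (by omega) (by exact ⟨i+1, by ring⟩)
  have h5 : f (2*i+2) ≤ f (2*i+1) := hf (by omega)
  have h6 : pmult (ptrans f) (2*i+1+1) = pmult (ptrans f) (2*i+2) := by congr 1
  rw [Nat.even_iff] at h4
  omega

lemma sum_parity_card (f : ℕ → ℕ) (P : ℕ) :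
    (∑ j ∈ Finset.range P, f j) % 2
      = ((Finset.range P).filter (fun j => f j % 2 = 1)).card % 2 := by
  rw [Finset.card_filter]
  induction P with
  | zero => simp
  | succ P ih =>
    rw [Finset.sum_range_succ, Finset.sum_range_succ]
    split_ifs with h
    · omega
    · omega

lemma card_split_parity (f : ℕ → ℕ) (P : ℕ) :
    ((Finset.range P).filter (fun j => f j % 2 = 1)).card
      + ((Finset.range P).filter (fun j => f j % 2 = 0)).card = P := by
  have h1 : ((Finset.range P).filter (fun j => f j % 2 = 0))
      = ((Finset.range P).filter (fun j => ¬ (f j % 2 = 1))) := by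
    apply Finset.filter_congr
    intro j _
    constructor <;> intro h <;> omega
  rw [h1, Finset.card_filter_add_card_filter_not, Finset.card_range]

/-- In a prefix `range (ptrans f k)`, the number of positions carrying an even part
is even (assuming `f` is orthogonal). -/
lemma evens_in_prefix_even (hf : Antitone f) (hN : ∀ j, N ≤ j → f j = 0)
    (ho : IsOrthogonal f) (k : ℕ) :
    ((Finset.range (ptrans f k)).filter (fun j => f j % 2 = 0)).card % 2 = 0 := by
  set P := ptrans f k with hP
  set T := (Finset.range P).filter (fun j => f j % 2 = 0) with hT
  have hmap : ∀ j ∈ T, f j ∈ T.image f := fun j hj => Finset.mem_image_of_mem f hj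
  have hcard := Finset.card_eq_sum_card_fiberwise hmap
  rw [hcard]
  rw [Finset.sum_nat_mod]
  have hz : ∀ y ∈ T.image f, (T.filter (fun j => f j = y)).card % 2 = 0 := by
    intro y hy
    obtain ⟨j1, hj1T, hj1⟩ := Finset.mem_image.1 hy
    rw [Finset.mem_filter, Finset.mem_range] at hj1T
    have hy2 : y % 2 = 0 := by rw [← hj1]; exact hj1T.2
    have hy1 : k + 1 ≤ y := by
      rw [← hj1]
      exact (lt_ptrans_iff hf hN k j1).2 hj1T.1
    have hfib : (T.filter (fun j => f j = y)).card = pmult f y := by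
      rw [pmult_eq_ncard]
      have : {j : ℕ | f j = y} = ↑(T.filter (fun j => f j = y)) := by
        ext j
        simp only [Set.mem_setOf_eq, Finset.coe_filter, Finset.mem_filter, Finset.mem_range,
          Set.mem_setOf_eq, hT]
        constructor
        · intro h
          refine ⟨⟨?_, ?_⟩, h⟩
          · rw [← lt_ptrans_iff hf hN k j] at *
            omega
          · rw [h]; exact hy2
        · intro h
          exact h.2
      rw [this, Set.ncard_coe_finset]
    rw [hfib]
    have := ho y (by omega) (by rw [Nat.even_iff]; exact hy2)
    rw [Nat.even_iff] at this
    exact this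
  rw [Finset.sum_congr rfl hz]
  simp

/-- parity of a prefix count equals parity of the prefix sum. -/
lemma ptrans_parity_eq_sum_parity (hf : Antitone f) (hN : ∀ j, N ≤ j → f j = 0)
    (ho : IsOrthogonal f) (k : ℕ) :
    (ptrans f k) % 2 = (∑ j ∈ Finset.range (ptrans f k), f j) % 2 := by
  have h1 := sum_parity_card f (ptrans f k)
  have h2 := card_split_parity f (ptrans f k)
  have h3 := evens_in_prefix_even hf hN ho k
  omega

/-- Run-parity lemma: for an even positive part `x` occurring in a special orthogonal
partition, both `ptrans f (x-1)` and `ptrans f x` are odd. -/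
lemma run_parity (hf : Antitone f) (hN : ∀ j, N ≤ j → f j = 0)
    (ho : IsOrthogonal f) (hp : ∀ i, f (2*i+1) % 2 = f (2*i+2) % 2)
    (hf0 : f 0 % 2 = 1) {x : ℕ} (hx : x % 2 = 0) (hx0 : 0 < x)
    (hocc : 0 < pmult f x) :
    ptrans f (x-1) % 2 = 1 ∧ ptrans f x % 2 = 1 := by
  set P := ptrans f (x-1) with hPdef
  -- find an occurrence
  have hne : {j : ℕ | f j = x}.Nonempty := by
    rw [pmult_eq_ncard] at hocc
    exact Set.nonempty_of_ncard_ne_zero (by omega)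
  obtain ⟨j1, hj1⟩ := hne
  simp only [Set.mem_setOf_eq] at hj1
  have hj1P : j1 < P := by
    rw [hPdef, ← lt_ptrans_iff hf hN (x-1) j1]
    omega
  have hP1 : 0 < P := by omega
  have hlast : f (P - 1) = x := by
    have h1 : x ≤ f (P-1) := by
      have := (lt_ptrans_iff hf hN (x-1) (P-1)).2 (by omega)
      omega
    have h2 : f (P-1) ≤ f j1 := hf (by omega)
    omega
  have hparP := ptrans_parity_eq_sum_parity hf hN ho (x-1)
  have hPodd : P % 2 = 1 := by
    by_contra h
    have hPeven : P % 2 = 0 := by omega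
    obtain ⟨i, hi⟩ : ∃ i, P = 2*i+2 := ⟨(P-2)/2, by omega⟩
    have := sum_parity_pairs hp i
    rw [← hi] at this
    have hl : f (2*i+1) = x := by
      rw [show 2*i+1 = P - 1 by omega] at *
      exact hlast
    rw [hl] at this
    rw [← hPdef] at hparP
    omega
  refine ⟨hPodd, ?_⟩
  have hc : pmult f x = ptrans f (x-1) - ptrans f x := by
    have := pmult_succ hf hN (x-1)
    rw [show x - 1 + 1 = x by omega] at this
    exact this
  have hle : ptrans f x ≤ ptrans f (x-1) := by
    have := ptrans_antitone hf hN (show x - 1 ≤ x by omega)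
    exact this
  have hcev := ho x (by omega) (by rw [Nat.even_iff]; exact hx)
  rw [Nat.even_iff] at hcev
  omega

/-- number of nonzero parts is odd, for a partition of an odd number. -/
lemma len_odd (hf : Antitone f) (hN : ∀ j, N ≤ j → f j = 0)
    (ho : IsOrthogonal f) {m : ℕ} (hm : (∑ j ∈ Finset.range N, f j) = m)
    (hmo : m % 2 = 1) : ptrans f 0 % 2 = 1 := by
  have h1 := ptrans_parity_eq_sum_parity hf hN ho 0
  have h2 : ∑ j ∈ Finset.range N, f j = ∑ j ∈ Finset.range (max N (ptrans f 0)), f j :=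
    (sum_ext hN (le_max_left _ _)).symm
  have h3 : ∑ j ∈ Finset.range (max N (ptrans f 0)), f j
      = ∑ j ∈ Finset.range (ptrans f 0), f j
        + ∑ j ∈ Finset.Ico (ptrans f 0) (max N (ptrans f 0)), f j := by
    rw [Finset.sum_range_add_sum_Ico _ (le_max_right _ _)]
  have h4 : ∑ j ∈ Finset.Ico (ptrans f 0) (max N (ptrans f 0)), f j = 0 := by
    apply Finset.sum_eq_zero
    intro j hj
    rw [Finset.mem_Ico] at hj
    have : ¬ (0 + 1 ≤ f j) := by
      rw [lt_ptrans_iff hf hN 0 j]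
      omega
    omega
  omega

end Parity

section Xi
open Finset

/-- Full case analysis of the `ξ` sequence in the type-B setting (`d` odd, `ε₁ = ε₂ = 1`). -/
lemma xi_spec (f g : ℕ → ℕ) {d : ℕ} (hd : d % 2 = 1) (j : ℕ) :
    (xiSeq f g 1 1 d j = 1 ∧ j % 2 = 1 ∧ f j % 2 = 1 ∧ g j % 2 = 1
        ∧ f j + g j < f (j-1) + g (j-1))
  ∨ (xiSeq f g 1 1 d j = -1 ∧ j % 2 = 0 ∧ f j % 2 = 1 ∧ g j % 2 = 1
        ∧ f (j+1) + g (j+1) < f j + g j)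
  ∨ (xiSeq f g 1 1 d j = 0
        ∧ ¬(j % 2 = 1 ∧ f j % 2 = 1 ∧ g j % 2 = 1 ∧ f j + g j < f (j-1) + g (j-1))
        ∧ ¬(j % 2 = 0 ∧ f j % 2 = 1 ∧ g j % 2 = 1 ∧ f (j+1) + g (j+1) < f j + g j)) := by
  unfold xiSeq
  split_ifs with h1 h2
  · left
    obtain ⟨ha, hb, hc, hd'⟩ := h1
    have hj : j % 2 = 1 := by omega
    refine ⟨rfl, hj, hb, hc, ?_⟩
    rcases hd' with h | h
    · omega
    · exact h
  · right; left
    obtain ⟨ha, hb, hc, hd'⟩ := h2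
    exact ⟨rfl, by omega, hb, hc, hd'⟩
  · right; right
    refine ⟨rfl, ?_, ?_⟩
    · rintro ⟨ha, hb, hc, hd'⟩
      exact h1 ⟨by omega, hb, hc, Or.inr hd'⟩
    · rintro ⟨ha, hb, hc, hd'⟩
      exact h2 ⟨by omega, hb, hc, hd'⟩

lemma xi_trichotomy (f g : ℕ → ℕ) {d : ℕ} (hd : d % 2 = 1) (j : ℕ) :
    xiSeq f g 1 1 d j = 1 ∨ xiSeq f g 1 1 d j = -1 ∨ xiSeq f g 1 1 d j = 0 := by
  rcases xi_spec f g hd j with ⟨h, _⟩ | ⟨h, _⟩ | ⟨h, _⟩ <;> tauto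

lemma xi_neg_of (f g : ℕ → ℕ) {d : ℕ} (hd : d % 2 = 1) {j : ℕ}
    (h1 : j % 2 = 0) (h2 : f j % 2 = 1) (h3 : g j % 2 = 1)
    (h4 : f (j+1) + g (j+1) < f j + g j) :
    xiSeq f g 1 1 d j = -1 := by
  rcases xi_spec f g hd j with ⟨_, hj, _⟩ | ⟨h, _⟩ | ⟨_, _, hn⟩
  · omega
  · exact h
  · exact absurd ⟨h1, h2, h3, h4⟩ hn

lemma xi_one_of (f g : ℕ → ℕ) {d : ℕ} (hd : d % 2 = 1) {j : ℕ}
    (h1 : j % 2 = 1) (h2 : f j % 2 = 1) (h3 : g j % 2 = 1)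
    (h4 : f j + g j < f (j-1) + g (j-1)) :
    xiSeq f g 1 1 d j = 1 := by
  rcases xi_spec f g hd j with ⟨h, _⟩ | ⟨_, hj, _⟩ | ⟨_, hn, _⟩
  · exact h
  · omega
  · exact absurd ⟨h1, h2, h3, h4⟩ hn

section Struct

variable {f g : ℕ → ℕ} {d : ℕ}

/-- constancy from equal sums. -/
lemma const_of_sum_eq (hf : Antitone f) (hg : Antitone g) {a b : ℕ} (hab : a ≤ b)
    (hs : f a + g a = f b + g b) : f a = f b ∧ g a = g b := by
  have h1 := hf hab
  have h2 := hg hab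
  omega

/-- the joint sum drops strictly whenever the both-odd property is lost. -/
lemma drop_of_exit (hf : Antitone f) (hg : Antitone g) {j : ℕ}
    (h1 : f j % 2 = 1) (h2 : g j % 2 = 1)
    (h3 : ¬ (f (j+1) % 2 = 1 ∧ g (j+1) % 2 = 1)) :
    f (j+1) + g (j+1) < f j + g j := by
  by_contra h
  have hle1 : f (j+1) ≤ f j := hf (by omega : j ≤ j + 1)
  have hle2 : g (j+1) ≤ g j := hg (by omega : j ≤ j + 1)
  have h4 : f j + g j = f (j+1) + g (j+1) := by omega
  obtain ⟨e1, e2⟩ := const_of_sum_eq hf hg (by omega : j ≤ j + 1) h4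
  exact h3 ⟨by omega, by omega⟩

lemma event_of_exit (hf : Antitone f) (hg : Antitone g) (hd : d % 2 = 1) {j : ℕ}
    (hj : j % 2 = 0) (h1 : f j % 2 = 1) (h2 : g j % 2 = 1)
    (h3 : ¬ (f (j+1) % 2 = 1 ∧ g (j+1) % 2 = 1)) :
    xiSeq f g 1 1 d j = -1 :=
  xi_neg_of f g hd hj h1 h2 (drop_of_exit hf hg h1 h2 h3)

/-- pairing: the both-odd property propagates across odd (0-based) indices. -/
lemma odd2_pair (hpf : ∀ i, f (2*i+1) % 2 = f (2*i+2) % 2)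
    (hpg : ∀ i, g (2*i+1) % 2 = g (2*i+2) % 2) {j : ℕ} (hj : j % 2 = 1) :
    (f j % 2 = 1 ∧ g j % 2 = 1) ↔ (f (j+1) % 2 = 1 ∧ g (j+1) % 2 = 1) := by
  obtain ⟨i, rfl⟩ : ∃ i, j = 2*i+1 := ⟨j/2, by omega⟩
  have h1 := hpf i
  have h2 := hpg i
  rw [show 2*i+1+1 = 2*i+2 from by ring]
  omega

/-- either an event occurred before `K`, or position `K-1` is both-odd. -/
lemma event_or_odd2 (hf : Antitone f) (hg : Antitone g) (hd : d % 2 = 1)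
    (hf0 : f 0 % 2 = 1) (hg0 : g 0 % 2 = 1)
    (hpf : ∀ i, f (2*i+1) % 2 = f (2*i+2) % 2)
    (hpg : ∀ i, g (2*i+1) % 2 = g (2*i+2) % 2) :
    ∀ K, 1 ≤ K → (f (K-1) % 2 = 1 ∧ g (K-1) % 2 = 1) ∨ (∃ j < K, xiSeq f g 1 1 d j ≠ 0) := by
  intro K
  induction K with
  | zero => omega
  | succ K ih =>
    intro _
    rcases Nat.eq_zero_or_pos K with rfl | hK
    · left
      simpa using ⟨hf0, hg0⟩
    · rcases ih hK with h | h
      · by_cases hcur : f K % 2 = 1 ∧ g K % 2 = 1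
        · left
          simpa using hcur
        · rcases Nat.even_or_odd (K-1) with he | ho
          · right
            refine ⟨K-1, by omega, ?_⟩
            rw [event_of_exit hf hg hd (by rw [Nat.even_iff] at he; omega) h.1 h.2
              (by rw [show K - 1 + 1 = K from by omega]; exact hcur)]
            norm_num
          · exfalso
            have := odd2_pair hpf hpg (j := K-1) (by rw [Nat.odd_iff] at ho; omega)
            rw [show K - 1 + 1 = K from by omega] at this
            exact hcur (this.1 h)
      · right
        obtain ⟨j, hj, hje⟩ := h
        exact ⟨j, by omega, hje⟩

end Struct
end Xi

/-- The "state" predicate: the partial sum of `ξ` over `range K` equals `-1`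
iff `EEX f g d K` holds. -/
def EEX (f g : ℕ → ℕ) (d : ℕ) : ℕ → Prop
  | 0 => False
  | (K+1) => (∃ i ≤ K, xiSeq f g 1 1 d i ≠ 0)
      ∧ (¬(f K % 2 = 1 ∧ g K % 2 = 1) ∨ xiSeq f g 1 1 d K = -1)

section Invariant
open Finset

variable {f g : ℕ → ℕ} {d : ℕ}

lemma xi_invariant (hf : Antitone f) (hg : Antitone g) (hd : d % 2 = 1)
    (hf0 : f 0 % 2 = 1) (hg0 : g 0 % 2 = 1)
    (hpf : ∀ i, f (2*i+1) % 2 = f (2*i+2) % 2)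
    (hpg : ∀ i, g (2*i+1) % 2 = g (2*i+2) % 2) :
    ∀ K, (∑ j ∈ Finset.range K, xiSeq f g 1 1 d j = 0 ∧ ¬ EEX f g d K)
       ∨ (∑ j ∈ Finset.range K, xiSeq f g 1 1 d j = -1 ∧ EEX f g d K) := by
  intro K
  induction K with
  | zero =>
    left
    exact ⟨by simp, fun h => h⟩
  | succ K IH =>
    rcases xi_spec f g hd K with ⟨hx, hj, hfo, hgo, hdrop⟩ |
      ⟨hx, hj, hfo, hgo, hdrop⟩ | ⟨hx, hn1, hn2⟩
    · -- ξ K = 1 : previous state must be -1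
      obtain ⟨K', rfl⟩ : ∃ K', K = K'+1 := ⟨K-1, by omega⟩
      have hdrop' : f (K'+1) + g (K'+1) < f K' + g K' := by simpa using hdrop
      have hEEK : EEX f g d (K'+1) := by
        by_cases hodd2' : f K' % 2 = 1 ∧ g K' % 2 = 1
        · have hxo : xiSeq f g 1 1 d K' = -1 :=
            xi_neg_of f g hd (by omega) hodd2'.1 hodd2'.2 hdrop'
          exact ⟨⟨K', le_rfl, by rw [hxo]; norm_num⟩, Or.inr hxo⟩
        · refine ⟨?_, Or.inl hodd2'⟩
          rcases Nat.eq_zero_or_pos K' with rfl | hK'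
          · exact absurd ⟨hf0, hg0⟩ hodd2'
          · rcases event_or_odd2 hf hg hd hf0 hg0 hpf hpg K' hK' with h | h
            · rcases Nat.even_or_odd (K'-1) with he | ho
              · refine ⟨K'-1, by omega, ?_⟩
                rw [event_of_exit hf hg hd (by rw [Nat.even_iff] at he; omega) h.1 h.2
                  (by rw [show K' - 1 + 1 = K' from by omega]; exact hodd2')]
                norm_num
              · exfalso
                have := odd2_pair hpf hpg (j := K'-1) (by rw [Nat.odd_iff] at ho; omega)
                rw [show K' - 1 + 1 = K' from by omega] at this
                exact hodd2' (this.1 h)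
            · obtain ⟨j, hjlt, hje⟩ := h
              exact ⟨j, by omega, hje⟩
      rcases IH with ⟨hT, hnE⟩ | ⟨hT, hE⟩
      · exact absurd hEEK hnE
      · left
        constructor
        · rw [Finset.sum_range_succ, hT, hx]; norm_num
        · rintro ⟨_, hsec⟩
          rcases hsec with h | h
          · exact h ⟨hfo, hgo⟩
          · rw [hx] at h; norm_num at h
    · -- ξ K = -1 : previous state must be 0
      have hnEEK : ¬ EEX f g d K := by
        rcases Nat.eq_zero_or_pos K with rfl | hK
        · exact fun h => h
        · obtain ⟨K', rfl⟩ : ∃ K', K = K'+1 := ⟨K-1, by omega⟩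
          rintro ⟨_, hsec⟩
          have hK'odd : K' % 2 = 1 := by omega
          rcases hsec with h | h
          · have := (odd2_pair hpf hpg hK'odd).2 ⟨hfo, hgo⟩
            exact h this
          · rcases xi_spec f g hd K' with ⟨h1, _⟩ | ⟨_, h2, _⟩ | ⟨h1, _⟩
            · rw [h1] at h; norm_num at h
            · omega
            · rw [h1] at h; norm_num at h
      rcases IH with ⟨hT, hnE⟩ | ⟨hT, hE⟩
      · right
        constructor
        · rw [Finset.sum_range_succ, hT, hx]; norm_num
        · exact ⟨⟨K, le_rfl, by rw [hx]; norm_num⟩, Or.inr hx⟩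
      · exact absurd hE hnEEK
    · -- ξ K = 0 : state persists
      rcases IH with ⟨hT, hnE⟩ | ⟨hT, hE⟩
      · left
        constructor
        · rw [Finset.sum_range_succ, hT, hx]; norm_num
        · rintro ⟨⟨i, hiK, hie⟩, hsec⟩
          have hiK' : i < K := by
            rcases Nat.lt_or_ge i K with h | h
            · exact h
            · have : i = K := by omega
              rw [this, hx] at hie
              exact absurd rfl hie
          have hK1 : 1 ≤ K := by omega
          obtain ⟨K', rfl⟩ : ∃ K', K = K'+1 := ⟨K-1, by omega⟩
          have hnodd2K : ¬ (f (K'+1) % 2 = 1 ∧ g (K'+1) % 2 = 1) := by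
            rcases hsec with h | h
            · exact h
            · rw [hx] at h; norm_num at h
          apply hnE
          refine ⟨⟨i, by omega, hie⟩, ?_⟩
          by_cases hodd2' : f K' % 2 = 1 ∧ g K' % 2 = 1
          · rcases Nat.even_or_odd K' with he | ho
            · exact Or.inr (event_of_exit hf hg hd (by rw [Nat.even_iff] at he; omega)
                hodd2'.1 hodd2'.2 hnodd2K)
            · exfalso
              exact hnodd2K ((odd2_pair hpf hpg (by rw [Nat.odd_iff] at ho; omega)).1 hodd2')
          · exact Or.inl hodd2'
      · right
        constructor
        · rw [Finset.sum_range_succ, hT, hx]; norm_num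
        · have hK1 : 1 ≤ K := by
            rcases Nat.eq_zero_or_pos K with rfl | hK
            · exact absurd hE (fun h => h)
            · omega
          obtain ⟨K', rfl⟩ : ∃ K', K = K'+1 := ⟨K-1, by omega⟩
          obtain ⟨⟨i, hi, hie⟩, hsec⟩ := hE
          refine ⟨⟨i, by omega, hie⟩, Or.inl ?_⟩
          rintro ⟨hfK, hgK⟩
          rcases Nat.even_or_odd K' with he | ho
          · -- K' even, K = K'+1 odd : contradiction with hn1
            have he' : K' % 2 = 0 := by rwa [Nat.even_iff] at he
            have hdropK : f (K'+1) + g (K'+1) < f K' + g K' := by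
              rcases hsec with h | h
              · -- ¬odd2 K' but odd2 (K'+1) forces a strict drop
                by_contra hc
                have hle1 : f (K'+1) ≤ f K' := hf (by omega : K' ≤ K' + 1)
                have hle2 : g (K'+1) ≤ g K' := hg (by omega : K' ≤ K' + 1)
                have heq : f K' + g K' = f (K'+1) + g (K'+1) := by omega
                obtain ⟨e1, e2⟩ := const_of_sum_eq hf hg (by omega : K' ≤ K' + 1) heq
                exact h ⟨by omega, by omega⟩
              · rcases xi_spec f g hd K' with ⟨h1, _⟩ | ⟨_, _, _, _, h5⟩ | ⟨h1, _⟩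
                · rw [h1] at h; norm_num at h
                · exact h5
                · rw [h1] at h; norm_num at h
            apply hn1
            refine ⟨by omega, hfK, hgK, ?_⟩
            rw [show K' + 1 - 1 = K' from by omega]
            exact hdropK
          · -- K' odd : pairing gives odd2 K', contradicting hsec
            rcases hsec with h | h
            · exact h ((odd2_pair hpf hpg (by rw [Nat.odd_iff] at ho; omega)).2 ⟨hfK, hgK⟩)
            · rcases xi_spec f g hd K' with ⟨h1, _⟩ | ⟨_, h2, _⟩ | ⟨h1, _⟩
              · rw [h1] at h; norm_num at h
              · rw [Nat.odd_iff] at ho; omega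
              · rw [h1] at h; norm_num at h

end Invariant

section Wfacts
open Finset

variable {f g w : ℕ → ℕ} {d : ℕ} {Nf Ng : ℕ}

lemma wald_nonneg (hd : d % 2 = 1) (j : ℕ) : 0 ≤ wald f g 1 1 d j := by
  show (0:ℤ) ≤ (f j : ℤ) + (g j : ℤ) + xiSeq f g 1 1 d j
  rcases xi_spec f g hd j with ⟨hx, _, hb, _, _⟩ | ⟨hx, _, hb, _, _⟩ | ⟨hx, _, _⟩ <;> omega

lemma w_antitone (hf : Antitone f) (hg : Antitone g) (hd : d % 2 = 1)
    (hw : ∀ j, (w j : ℤ) = wald f g 1 1 d j) : Antitone w := by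
  apply antitone_nat_of_succ_le
  intro j
  have hwj : (w j : ℤ) = (f j : ℤ) + (g j : ℤ) + xiSeq f g 1 1 d j := hw j
  have hwj1 : (w (j+1) : ℤ) = (f (j+1) : ℤ) + (g (j+1) : ℤ) + xiSeq f g 1 1 d (j+1) :=
    hw (j+1)
  have hle1 : f (j+1) ≤ f j := hf (by omega)
  have hle2 : g (j+1) ≤ g j := hg (by omega)
  rcases xi_spec f g hd (j+1) with ⟨hx1, h1a, h1b, h1c, h1d⟩ |
      ⟨hx1, h1a, h1b, h1c, h1d⟩ | ⟨hx1, h1a, h1b⟩ <;>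
    rcases xi_spec f g hd j with ⟨hx0, h0a, h0b, h0c, h0d⟩ |
      ⟨hx0, h0a, h0b, h0c, h0d⟩ | ⟨hx0, h0a, h0b⟩ <;>
    (try simp only [Nat.add_sub_cancel] at *) <;> omega

lemma xi_zero_far (hd : d % 2 = 1) {j : ℕ} (hfj : f j = 0) : xiSeq f g 1 1 d j = 0 := by
  rcases xi_spec f g hd j with ⟨_, _, hb, _, _⟩ | ⟨_, _, hb, _, _⟩ | ⟨hx, _, _⟩ <;> omega

lemma w_supp (hd : d % 2 = 1) (hw : ∀ j, (w j : ℤ) = wald f g 1 1 d j)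
    (hNf : ∀ j, Nf ≤ j → f j = 0) (hNg : ∀ j, Ng ≤ j → g j = 0) :
    ∀ j, max Nf Ng ≤ j → w j = 0 := by
  intro j hj
  have h1 : f j = 0 := hNf j (by omega)
  have h2 : g j = 0 := hNg j (by omega)
  have h3 := xi_zero_far (g := g) hd h1
  have h4 := hw j
  show w j = 0
  rw [wald, h1, h2, h3] at h4
  omega

lemma T_eventually (hf : Antitone f) (hg : Antitone g) (hd : d % 2 = 1)
    (hf0 : f 0 % 2 = 1) (hg0 : g 0 % 2 = 1)
    (hpf : ∀ i, f (2*i+1) % 2 = f (2*i+2) % 2)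
    (hpg : ∀ i, g (2*i+1) % 2 = g (2*i+2) % 2)
    (hNf : ∀ j, Nf ≤ j → f j = 0) (hNg : ∀ j, Ng ≤ j → g j = 0) :
    ∀ M, max Nf Ng + 1 ≤ M → ∑ j ∈ Finset.range M, xiSeq f g 1 1 d j = -1 := by
  intro M hM
  have hEE : EEX f g d M := by
    obtain ⟨M', rfl⟩ : ∃ M', M = M'+1 := ⟨M-1, by omega⟩
    have hfM' : f M' = 0 := hNf M' (by omega)
    have hgM' : g M' = 0 := hNg M' (by omega)
    constructor
    · rcases event_or_odd2 hf hg hd hf0 hg0 hpf hpg (max Nf Ng + 1) (by omega) with h | h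
      · exfalso
        have : f (max Nf Ng + 1 - 1) = 0 := hNf _ (by omega)
        omega
      · obtain ⟨j, hj, hje⟩ := h
        exact ⟨j, by omega, hje⟩
    · left
      rintro ⟨h1, _⟩
      omega
  rcases xi_invariant hf hg hd hf0 hg0 hpf hpg M with ⟨_, hnE⟩ | ⟨hT, _⟩
  · exact absurd hEE hnE
  · exact hT

lemma w_sum (hf : Antitone f) (hg : Antitone g) (hd : d % 2 = 1)
    (hf0 : f 0 % 2 = 1) (hg0 : g 0 % 2 = 1)
    (hpf : ∀ i, f (2*i+1) % 2 = f (2*i+2) % 2)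
    (hpg : ∀ i, g (2*i+1) % 2 = g (2*i+2) % 2)
    (hNf : ∀ j, Nf ≤ j → f j = 0) (hNg : ∀ j, Ng ≤ j → g j = 0)
    (hw : ∀ j, (w j : ℤ) = wald f g 1 1 d j) {m1 m2 : ℕ}
    (hsf : ∑ j ∈ Finset.range Nf, f j = m1) (hsg : ∑ j ∈ Finset.range Ng, g j = m2) :
    ∀ M, max Nf Ng + 1 ≤ M → ∑ j ∈ Finset.range M, w j = m1 + m2 - 1 ∧ 1 ≤ m1 + m2 := by
  intro M hM
  have hT := T_eventually hf hg hd hf0 hg0 hpf hpg hNf hNg M hM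
  have hcast : ((∑ j ∈ Finset.range M, w j : ℕ) : ℤ)
      = (∑ j ∈ Finset.range M, f j : ℕ) + (∑ j ∈ Finset.range M, g j : ℕ)
        + ∑ j ∈ Finset.range M, xiSeq f g 1 1 d j := by
    push_cast
    rw [← Finset.sum_add_distrib, ← Finset.sum_add_distrib]
    exact Finset.sum_congr rfl (fun j _ => hw j)
  have e1 : ∑ j ∈ Finset.range M, f j = m1 := by
    rw [sum_ext hNf (show Nf ≤ M by omega), hsf]
  have e2 : ∑ j ∈ Finset.range M, g j = m2 := by
    rw [sum_ext hNg (show Ng ≤ M by omega), hsg]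
  rw [e1, e2, hT] at hcast
  have hm1 : 1 ≤ m1 := by
    rw [← hsf]
    have h01 : 1 ≤ f 0 := by omega
    have h0N : 0 < Nf := by
      by_contra h
      have := hNf 0 (by omega)
      omega
    calc 1 ≤ f 0 := h01
      _ ≤ ∑ j ∈ Finset.range Nf, f j := by
          rw [← Finset.sum_range_add_sum_Ico _ (show 1 ≤ Nf by omega)]
          simp only [Finset.sum_range_one]
          omega
  constructor
  · omega
  · omega

end Wfacts

section Worth
open Finset

variable {f g w : ℕ → ℕ} {d Nf Ng : ℕ}

lemma const_pair (hf : Antitone f) (hg : Antitone g) {j0 j : ℕ}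
    (h : f j + g j = f j0 + g j0) : f j = f j0 ∧ g j = g j0 := by
  rcases le_total j j0 with hle | hle
  · have := const_of_sum_eq hf hg hle h
    omega
  · have := const_of_sum_eq hf hg hle h.symm
    omega

lemma w_eq_iff_xi_zero (hd : d % 2 = 1) (hw : ∀ j, (w j : ℤ) = wald f g 1 1 d j)
    {k : ℕ} (hk2 : k % 2 = 0) (j : ℕ) :
    w j = k ↔ (xiSeq f g 1 1 d j = 0 ∧ f j + g j = k) := by
  have hwj : (w j : ℤ) = (f j : ℤ) + (g j : ℤ) + xiSeq f g 1 1 d j := hw j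
  constructor
  · intro h
    rcases xi_spec f g hd j with ⟨hx, _, hb, hc, _⟩ | ⟨hx, _, hb, hc, _⟩ | ⟨hx, _, _⟩
    · exfalso; omega
    · exfalso; omega
    · constructor
      · exact hx
      · omega
  · rintro ⟨hx, hs⟩
    omega

lemma w_orthogonal (hf : Antitone f) (hg : Antitone g) (hd : d % 2 = 1)
    (hNf : ∀ j, Nf ≤ j → f j = 0) (hNg : ∀ j, Ng ≤ j → g j = 0)
    (hf0 : f 0 % 2 = 1) (hg0 : g 0 % 2 = 1)
    (hpf : ∀ i, f (2*i+1) % 2 = f (2*i+2) % 2)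
    (hpg : ∀ i, g (2*i+1) % 2 = g (2*i+2) % 2)
    (hof : IsOrthogonal f) (hog : IsOrthogonal g)
    (hsof : (∑ j ∈ Finset.range Nf, f j) % 2 = 1)
    (hsog : (∑ j ∈ Finset.range Ng, g j) % 2 = 1)
    (hw : ∀ j, (w j : ℤ) = wald f g 1 1 d j) :
    IsOrthogonal w := by
  intro k hk hek
  have hk2 : k % 2 = 0 := by rwa [Nat.even_iff] at hek
  rw [Nat.even_iff, pmult_eq_ncard]
  by_cases hne : {j : ℕ | w j = k}.Nonempty
  swap
  · rw [Set.not_nonempty_iff_eq_empty] at hne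
    rw [hne]
    simp
  obtain ⟨j0, hj0⟩ := hne
  simp only [Set.mem_setOf_eq] at hj0
  obtain ⟨hxi0, hsum0⟩ := (w_eq_iff_xi_zero hd hw hk2 j0).1 hj0
  set x := f j0 with hx
  set y := g j0 with hy
  have hxy : x + y = k := hsum0
  -- occurrence facts
  have hoccf : 0 < x → 0 < pmult f x := by
    intro hx0
    rw [pmult_eq_ncard]
    have hfin : {j : ℕ | f j = x}.Finite := by
      apply Set.Finite.subset (Set.finite_Iio Nf)
      intro a ha
      simp only [Set.mem_setOf_eq] at ha
      simp only [Set.mem_Iio]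
      by_contra hc
      have := hNf a (by omega)
      omega
    rw [Set.ncard_pos hfin]
    exact ⟨j0, rfl⟩
  have hoccg : 0 < y → 0 < pmult g y := by
    intro hy0
    rw [pmult_eq_ncard]
    have hfin : {j : ℕ | g j = y}.Finite := by
      apply Set.Finite.subset (Set.finite_Iio Ng)
      intro a ha
      simp only [Set.mem_setOf_eq] at ha
      simp only [Set.mem_Iio]
      by_contra hc
      have := hNg a (by omega)
      omega
    rw [Set.ncard_pos hfin]
    exact ⟨j0, rfl⟩
  rcases Nat.even_or_odd x with hxev | hxod
  · -- CASE A : both parts even; ξ vanishes on the block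
    have hxe : x % 2 = 0 := by rwa [Nat.even_iff] at hxev
    have hye : y % 2 = 0 := by omega
    have hSA : {j : ℕ | w j = k} = {j : ℕ | f j = x ∧ g j = y} := by
      ext j
      simp only [Set.mem_setOf_eq]
      rw [w_eq_iff_xi_zero hd hw hk2 j]
      constructor
      · rintro ⟨hxj, hsj⟩
        exact const_pair hf hg (by omega)
      · rintro ⟨h1, h2⟩
        have hxj : xiSeq f g 1 1 d j = 0 := by
          rcases xi_spec f g hd j with ⟨_, _, hb, _, _⟩ | ⟨_, _, hb, _, _⟩ | ⟨hxj, _, _⟩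
          · omega
          · omega
          · exact hxj
        exact ⟨hxj, by omega⟩
    rw [hSA]
    rcases Nat.eq_zero_or_pos x with hx0 | hx0
    · -- x = 0, y = k > 0
      have hy0 : 0 < y := by omega
      have hrg := run_parity hg hNg hog hpg hg0 hye hy0 (hoccg hy0)
      have hlf : ptrans f 0 % 2 = 1 :=
        len_odd hf hNf hof rfl (by omega)
      have hset : {j : ℕ | f j = x ∧ g j = y}
          = Set.Ico (max (ptrans f 0) (ptrans g y)) (ptrans g (y-1)) := by
        ext j
        simp only [Set.mem_setOf_eq, Set.mem_Ico]
        have e1 := lt_ptrans_iff hf hNf 0 j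
        have e2 := lt_ptrans_iff hg hNg (y-1) j
        rw [show y - 1 + 1 = y from by omega] at e2
        have e3 := lt_ptrans_iff hg hNg y j
        have e4 : f j = x ↔ f j = 0 := by rw [← hx0]
        omega
      rw [hset, ncard_Ico]
      omega
    rcases Nat.eq_zero_or_pos y with hy0 | hy0
    · -- y = 0, x = k > 0
      have hrf := run_parity hf hNf hof hpf hf0 hxe hx0 (hoccf hx0)
      have hlg : ptrans g 0 % 2 = 1 :=
        len_odd hg hNg hog rfl (by omega)
      have hset : {j : ℕ | f j = x ∧ g j = y}
          = Set.Ico (max (ptrans f x) (ptrans g 0)) (ptrans f (x-1)) := by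
        ext j
        simp only [Set.mem_setOf_eq, Set.mem_Ico]
        have e1 := lt_ptrans_iff hg hNg 0 j
        have e2 := lt_ptrans_iff hf hNf (x-1) j
        rw [show x - 1 + 1 = x from by omega] at e2
        have e3 := lt_ptrans_iff hf hNf x j
        have e4 : g j = y ↔ g j = 0 := by rw [← hy0]
        omega
      rw [hset, ncard_Ico]
      omega
    · -- x, y > 0 both even
      have hrf := run_parity hf hNf hof hpf hf0 hxe hx0 (hoccf hx0)
      have hrg := run_parity hg hNg hog hpg hg0 hye hy0 (hoccg hy0)
      have hset : {j : ℕ | f j = x ∧ g j = y}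
          = Set.Ico (max (ptrans f x) (ptrans g y))
              (min (ptrans f (x-1)) (ptrans g (y-1))) := by
        ext j
        simp only [Set.mem_setOf_eq, Set.mem_Ico, lt_min_iff]
        have e1 := lt_ptrans_iff hf hNf (x-1) j
        rw [show x - 1 + 1 = x from by omega] at e1
        have e2 := lt_ptrans_iff hf hNf x j
        have e3 := lt_ptrans_iff hg hNg (y-1) j
        rw [show y - 1 + 1 = y from by omega] at e3
        have e4 := lt_ptrans_iff hg hNg y j
        omega
      rw [hset, ncard_Ico]
      omega
  · -- CASE B : both parts odd
    have hxo : x % 2 = 1 := by rwa [Nat.odd_iff] at hxod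
    have hyo : y % 2 = 1 := by omega
    have hx0 : 0 < x := by omega
    have hy0 : 0 < y := by omega
    set A := max (ptrans f x) (ptrans g y) with hA
    set B := min (ptrans f (x-1)) (ptrans g (y-1)) with hB
    have hI : ∀ j, (f j = x ∧ g j = y) ↔ (A ≤ j ∧ j < B) := by
      intro j
      have e1 := lt_ptrans_iff hf hNf (x-1) j
      rw [show x - 1 + 1 = x from by omega] at e1
      have e2 := lt_ptrans_iff hf hNf x j
      have e3 := lt_ptrans_iff hg hNg (y-1) j
      rw [show y - 1 + 1 = y from by omega] at e3
      have e4 := lt_ptrans_iff hg hNg y j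
      simp only [hA, hB, lt_min_iff, max_le_iff]
      omega
    have hj0I : A ≤ j0 ∧ j0 < B := (hI j0).1 ⟨rfl, rfl⟩
    have hAB : A < B := by omega
    -- ξ at block entry
    have hxiA : ∀ j, A ≤ j → j < B → (xiSeq f g 1 1 d j = 1 ↔ (j % 2 = 1 ∧ j = A)) := by
      intro j hjA hjB
      have hjI : f j = x ∧ g j = y := (hI j).2 ⟨hjA, hjB⟩
      constructor
      · intro hxj
        rcases xi_spec f g hd j with ⟨_, hja, _, _, hdrop⟩ | ⟨hxj', _, _⟩ | ⟨hxj', _, _⟩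
        · refine ⟨hja, ?_⟩
          by_contra hne
          have hj1I : f (j-1) = x ∧ g (j-1) = y := (hI (j-1)).2 ⟨by omega, by omega⟩
          omega
        · rw [hxj'] at hxj; norm_num at hxj
        · rw [hxj'] at hxj; norm_num at hxj
      · rintro ⟨hja, hje⟩
        have hfj : f j % 2 = 1 := by omega
        have hgj : g j % 2 = 1 := by omega
        apply xi_one_of f g hd hja hfj hgj
        have hj1 : ¬ (f (j-1) = x ∧ g (j-1) = y) := by
          rw [hI (j-1)]
          omega
        have hle1 : f j ≤ f (j-1) := hf (by omega)
        have hle2 : g j ≤ g (j-1) := hg (by omega)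
        omega
    -- ξ at block exit
    have hxiB : ∀ j, A ≤ j → j < B → (xiSeq f g 1 1 d j = -1 ↔ (j % 2 = 0 ∧ j = B - 1)) := by
      intro j hjA hjB
      have hjI : f j = x ∧ g j = y := (hI j).2 ⟨hjA, hjB⟩
      constructor
      · intro hxj
        rcases xi_spec f g hd j with ⟨hxj', _, _⟩ | ⟨_, hja, _, _, hdrop⟩ | ⟨hxj', _, _⟩
        · rw [hxj'] at hxj; norm_num at hxj
        · refine ⟨hja, ?_⟩
          by_contra hne
          have hj1I : f (j+1) = x ∧ g (j+1) = y := (hI (j+1)).2 ⟨by omega, by omega⟩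
          omega
        · rw [hxj'] at hxj; norm_num at hxj
      · rintro ⟨hja, hje⟩
        have hfj : f j % 2 = 1 := by omega
        have hgj : g j % 2 = 1 := by omega
        apply xi_neg_of f g hd hja hfj hgj
        have hj1 : ¬ (f (j+1) = x ∧ g (j+1) = y) := by
          rw [hI (j+1)]
          omega
        have hle1 : f (j+1) ≤ f j := hf (by omega)
        have hle2 : g (j+1) ≤ g j := hg (by omega)
        omega
    have hchar : ∀ j, w j = k ↔
        (A ≤ j ∧ j < B ∧ ¬(j = A ∧ A % 2 = 1) ∧ ¬(j = B - 1 ∧ (B-1) % 2 = 0)) := by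
      intro j
      rw [w_eq_iff_xi_zero hd hw hk2 j]
      constructor
      · rintro ⟨hxj, hsj⟩
        have hsj' : f j + g j = f j0 + g j0 := by omega
        have hjI := const_pair hf hg (j0 := j0) (j := j) hsj'
        have hjI' := (hI j).1 hjI
        refine ⟨hjI'.1, hjI'.2, ?_, ?_⟩
        · rintro ⟨hje, hpar⟩
          have h1 := (hxiA j hjI'.1 hjI'.2).2 ⟨by omega, hje⟩
          rw [hxj] at h1
          norm_num at h1
        · rintro ⟨hje, hpar⟩
          have h1 := (hxiB j hjI'.1 hjI'.2).2 ⟨by omega, hje⟩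
          rw [hxj] at h1
          norm_num at h1
      · rintro ⟨hjA, hjB, hn1, hn2⟩
        have hjI : f j = x ∧ g j = y := (hI j).2 ⟨hjA, hjB⟩
        have hxj : xiSeq f g 1 1 d j = 0 := by
          rcases xi_trichotomy f g hd j with h | h | h
          · have := (hxiA j hjA hjB).1 h
            exact absurd ⟨this.2, by omega⟩ hn1
          · have := (hxiB j hjA hjB).1 h
            exact absurd ⟨this.2, by omega⟩ hn2
          · exact h
        exact ⟨hxj, by omega⟩
    have hset : {j : ℕ | w j = k}
        = Set.Ico (if A % 2 = 1 then A + 1 else A) (if (B-1) % 2 = 0 then B - 1 else B) := by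
      ext j
      simp only [Set.mem_setOf_eq, Set.mem_Ico, hchar j]
      split_ifs with h1 h2 h2 <;> omega
    rw [hset, ncard_Ico]
    split_ifs with h1 h2 h2 <;> omega

end Worth

section StarLemmas
open Finset

variable {f g w : ℕ → ℕ} {d Nf Ng : ℕ}

lemma even_prefix (hp : ∀ i, f (2*i+1) % 2 = f (2*i+2) % 2) (hf0 : f 0 % 2 = 1)
    {j : ℕ} (hj : j % 2 = 1) (hfj : f j % 2 = 1) :
    (∑ i ∈ Finset.range (j+1), f i) % 2 = 0 := by
  obtain ⟨i, rfl⟩ : ∃ i, j = 2*i+1 := ⟨j/2, by omega⟩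
  rw [show 2*i+1+1 = 2*i+2 from by ring]
  have := sum_parity_pairs hp i
  omega

lemma w_sum_cast (hw : ∀ j, (w j : ℤ) = wald f g 1 1 d j) (K : ℕ) :
    ((∑ j ∈ Finset.range K, w j : ℕ) : ℤ)
      = (∑ j ∈ Finset.range K, f j : ℕ) + (∑ j ∈ Finset.range K, g j : ℕ)
        + ∑ j ∈ Finset.range K, xiSeq f g 1 1 d j := by
  push_cast
  rw [← Finset.sum_add_distrib, ← Finset.sum_add_distrib]
  exact Finset.sum_congr rfl (fun j _ => hw j)

/-- O1 : if both maximal multiplicities are exceeded, `w` has dropped. -/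
lemma w_lt_at_max (hf : Antitone f) (hg : Antitone g) (hd : d % 2 = 1)
    (hNf : ∀ j, Nf ≤ j → f j = 0) (hNg : ∀ j, Ng ≤ j → g j = 0)
    (hf0 : f 0 % 2 = 1) (hg0 : g 0 % 2 = 1)
    (hw : ∀ j, (w j : ℤ) = wald f g 1 1 d j)
    {K : ℕ} (h1 : pmult f (f 0) ≤ K) (h2 : pmult g (g 0) ≤ K) :
    w K < w 0 := by
  have hbf := max_mult_prefix hf hNf (by omega) K
  have hbg := max_mult_prefix hg hNg (by omega) K
  have hfK : f K < f 0 := by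
    have := hf (Nat.zero_le K)
    omega
  have hgK : g K < g 0 := by
    have := hg (Nat.zero_le K)
    omega
  have hw0 : (w 0 : ℤ) = (f 0 : ℤ) + g 0 + xiSeq f g 1 1 d 0 := hw 0
  have hwK : (w K : ℤ) = (f K : ℤ) + g K + xiSeq f g 1 1 d K := hw K
  have hx0 : xiSeq f g 1 1 d 0 = 0 ∨ xiSeq f g 1 1 d 0 = -1 := by
    rcases xi_spec f g hd 0 with ⟨_, h, _⟩ | ⟨h, _⟩ | ⟨h, _⟩
    · omega
    · right; exact h
    · left; exact h
  rcases xi_spec f g hd K with ⟨hx, _, hb, hc, _⟩ | ⟨hx, _, _⟩ | ⟨hx, _, _⟩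
  · -- ξ K = 1 : f K, g K odd, both dropped by ≥ 2
    have hf2 : f K + 2 ≤ f 0 := by omega
    have hg2 : g K + 2 ≤ g 0 := by omega
    omega
  · omega
  · omega

/-- O2 : odd `K`, zero partial sum with at least one event forces `w K < w 0`. -/
lemma w_lt_of_oddK (hf : Antitone f) (hg : Antitone g) (hd : d % 2 = 1)
    (hf0 : f 0 % 2 = 1) (hg0 : g 0 % 2 = 1)
    (hpf : ∀ i, f (2*i+1) % 2 = f (2*i+2) % 2)
    (hpg : ∀ i, g (2*i+1) % 2 = g (2*i+2) % 2)
    (hw : ∀ j, (w j : ℤ) = wald f g 1 1 d j)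
    {K : ℕ} (hK : K % 2 = 1)
    (hT : ∑ j ∈ Finset.range K, xiSeq f g 1 1 d j = 0)
    (hEv : ∃ j < K, xiSeq f g 1 1 d j ≠ 0) :
    w K < w 0 := by
  classical
  have hwa : Antitone w := w_antitone hf hg hd hw
  -- the last event
  set S := (Finset.range K).filter (fun j => xiSeq f g 1 1 d j ≠ 0) with hS
  have hSne : S.Nonempty := by
    obtain ⟨j, hj1, hj2⟩ := hEv
    exact ⟨j, by simp [hS, Finset.mem_filter, Finset.mem_range]; exact ⟨hj1, hj2⟩⟩
  set j1 := S.max' hSne with hj1def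
  have hj1S : j1 ∈ S := S.max'_mem hSne
  rw [hS, Finset.mem_filter, Finset.mem_range] at hj1S
  obtain ⟨hj1K, hj1e⟩ := hj1S
  have hmax : ∀ j, j1 < j → j < K → xiSeq f g 1 1 d j = 0 := by
    intro j hja hjb
    by_contra hc
    have : j ∈ S := by
      rw [hS, Finset.mem_filter, Finset.mem_range]
      exact ⟨hjb, hc⟩
    have := S.le_max' j this
    omega
  have htail : ∑ j ∈ Finset.Ico (j1+1) K, xiSeq f g 1 1 d j = 0 := by
    apply Finset.sum_eq_zero
    intro j hj
    rw [Finset.mem_Ico] at hj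
    exact hmax j (by omega) hj.2
  have hsplit : ∑ j ∈ Finset.range (j1+1), xiSeq f g 1 1 d j = 0 := by
    have h2 : ∑ j ∈ Finset.range (j1+1), xiSeq f g 1 1 d j
        + ∑ j ∈ Finset.Ico (j1+1) K, xiSeq f g 1 1 d j
        = ∑ j ∈ Finset.range K, xiSeq f g 1 1 d j :=
      Finset.sum_range_add_sum_Ico _ (by omega)
    rw [htail, hT] at h2
    omega
  -- the last event is a +1
  have hxj1 : xiSeq f g 1 1 d j1 = 1 := by
    rcases xi_trichotomy f g hd j1 with h | h | h
    · exact h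
    · exfalso
      have hEE : EEX f g d (j1+1) := ⟨⟨j1, le_rfl, hj1e⟩, Or.inr h⟩
      rcases xi_invariant hf hg hd hf0 hg0 hpf hpg (j1+1) with ⟨_, hnE⟩ | ⟨hT', _⟩
      · exact hnE hEE
      · omega
    · exact absurd h hj1e
  rcases xi_spec f g hd j1 with ⟨_, hj1o, hfo, hgo, hdrop⟩ | ⟨h, _⟩ | ⟨h, _⟩
  swap
  · omega
  swap
  · rw [h] at hxj1; norm_num at hxj1
  -- j1 is odd (0-based), K is odd, so j1 < K - 1, i.e. j1 + 1 < K
  have hj1lt : j1 + 1 < K := by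
    rcases Nat.lt_or_ge (j1+1) K with h | h
    · exact h
    · omega
  by_contra hc
  have hwK0 : w K = w 0 := by
    have := hwa (Nat.zero_le K)
    omega
  have hconst : ∀ j, j ≤ K → w j = w 0 := by
    intro j hj
    have h1 := hwa (Nat.zero_le j)
    have h2 := hwa hj
    omega
  have hwj1 : w j1 = w 0 := hconst j1 (by omega)
  have hwj11 : w (j1+1) = w 0 := hconst (j1+1) (by omega)
  have hxj11 : xiSeq f g 1 1 d (j1+1) = 0 := hmax (j1+1) (by omega) hj1lt
  have e0 : (w 0 : ℤ) = (f 0 : ℤ) + g 0 + xiSeq f g 1 1 d 0 := hw 0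
  have e1 : (w j1 : ℤ) = (f j1 : ℤ) + g j1 + xiSeq f g 1 1 d j1 := hw j1
  have e2 : (w (j1+1) : ℤ) = (f (j1+1) : ℤ) + g (j1+1) + xiSeq f g 1 1 d (j1+1) := hw (j1+1)
  have hsle : f (j1+1) + g (j1+1) ≤ f j1 + g j1 := by
    have h1 : f (j1+1) ≤ f j1 := hf (by omega : j1 ≤ j1 + 1)
    have h2 : g (j1+1) ≤ g j1 := hg (by omega : j1 ≤ j1 + 1)
    omega
  rcases xi_trichotomy f g hd 0 with h | h | h
  · rcases xi_spec f g hd 0 with ⟨_, hpar, _⟩ | ⟨h', _⟩ | ⟨h', _⟩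
    · omega
    · omega
    · omega
  · -- ξ 0 = -1 : contradiction via monotonicity of the sums
    omega
  · -- ξ 0 = 0 : contradiction via parity
    omega

/-- X9 : no events and one exceeded multiplicity forces `w K < w 0`. -/
lemma w_lt_no_events (hf : Antitone f) (hg : Antitone g) (hd : d % 2 = 1)
    (hNf : ∀ j, Nf ≤ j → f j = 0) (hNg : ∀ j, Ng ≤ j → g j = 0)
    (hf0 : f 0 % 2 = 1) (hg0 : g 0 % 2 = 1)
    (hw : ∀ j, (w j : ℤ) = wald f g 1 1 d j)
    {K : ℕ} (hNoEv : ∀ j < K, xiSeq f g 1 1 d j = 0)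
    (hm : pmult f (f 0) ≤ K ∨ pmult g (g 0) ≤ K) :
    w K < w 0 := by
  have hwa : Antitone w := w_antitone hf hg hd hw
  set m1 := pmult f (f 0) with hm1
  set m2 := pmult g (g 0) with hm2
  set m := min m1 m2 with hmm
  have hbf := fun j => max_mult_prefix hf hNf (by omega) j
  have hbg := fun j => max_mult_prefix hg hNg (by omega) j
  have hm11 : 0 < m1 := by
    have := (hbf 0).1 rfl
    omega
  have hm21 : 0 < m2 := by
    have := (hbg 0).1 rfl
    omega
  have hmK : m ≤ K := by
    rcases hm with h | h <;> omega
  -- the joint sum drops strictly at position m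
  have hdropm : f m + g m < f (m-1) + g (m-1) := by
    have hf1 : f (m-1) = f 0 := (hbf (m-1)).2 (by omega)
    have hg1 : g (m-1) = g 0 := (hbg (m-1)).2 (by omega)
    have hf2 : f m ≤ f 0 := hf (Nat.zero_le m)
    have hg2 : g m ≤ g 0 := hg (Nat.zero_le m)
    have : f m < f 0 ∨ g m < g 0 := by
      have b1 := hbf m
      have b2 := hbg m
      rcases Nat.lt_or_ge m m1 with h | h
      · right
        have : ¬ (g m = g 0) := by
          rw [hbg m]
          omega
        omega
      · left
        have : ¬ (f m = f 0) := by
          rw [hbf m]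
          omega
        omega
    omega
  -- m must be even
  have hmev : m % 2 = 0 := by
    by_contra hodd
    have hfm1 : f (m-1) = f 0 := (hbf (m-1)).2 (by omega)
    have hgm1 : g (m-1) = g 0 := (hbg (m-1)).2 (by omega)
    have hev : xiSeq f g 1 1 d (m-1) = -1 := by
      apply xi_neg_of f g hd (by omega) (by omega) (by omega)
      rw [show m - 1 + 1 = m from by omega]
      omega
    have := hNoEv (m-1) (by omega)
    rw [this] at hev
    norm_num at hev
  have hm2' : 2 ≤ m := by omega
  -- w 0 = f 0 + g 0
  have hx0 : xiSeq f g 1 1 d 0 = 0 := hNoEv 0 (by omega)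
  have e0 : (w 0 : ℤ) = (f 0 : ℤ) + g 0 + xiSeq f g 1 1 d 0 := hw 0
  have em : (w m : ℤ) = (f m : ℤ) + g m + xiSeq f g 1 1 d m := hw m
  have hwmK : w K ≤ w m := hwa hmK
  have hfm1 : f (m-1) = f 0 := (hbf (m-1)).2 (by omega)
  have hgm1 : g (m-1) = g 0 := (hbg (m-1)).2 (by omega)
  have hsm : f m + g m < f 0 + g 0 := by omega
  rcases xi_spec f g hd m with ⟨hx, _, hb, hc, _⟩ | ⟨hx, _, _⟩ | ⟨hx, _, _⟩
  · -- ξ m = 1 : parity gives a drop of ≥ 2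
    omega
  · omega
  · omega

end StarLemmas

section Master
open Finset

variable {f g w : ℕ → ℕ} {d Nf Ng : ℕ} {A1 A2 : ℕ → ℕ}

/-- Interpolation step at odd cuts with both multiplicities exceeded. -/
lemma interp_step (hf : Antitone f) (hg : Antitone g) (hd : d % 2 = 1)
    (hNf : ∀ j, Nf ≤ j → f j = 0) (hNg : ∀ j, Ng ≤ j → g j = 0)
    (hf0 : f 0 % 2 = 1) (hg0 : g 0 % 2 = 1)
    (hpf : ∀ i, f (2*i+1) % 2 = f (2*i+2) % 2)
    (hpg : ∀ i, g (2*i+1) % 2 = g (2*i+2) % 2)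
    (hw : ∀ j, (w j : ℤ) = wald f g 1 1 d j)
    (hA1lb : ∀ K, ∑ j ∈ Finset.range K, f j
        ≤ A1 K + (if pmult f (f 0) ≤ K then 1 else 0))
    (hA2lb : ∀ K, ∑ j ∈ Finset.range K, g j
        ≤ A2 K + (if pmult g (g 0) ≤ K then 1 else 0))
    (hA1ev : ∀ K, K % 2 = 0 → A1 K % 2 = 0) (hA2ev : ∀ K, K % 2 = 0 → A2 K % 2 = 0)
    (hA1cc : ∀ K, A1 K + A1 (K+2) ≤ 2 * A1 (K+1))
    (hA2cc : ∀ K, A2 K + A2 (K+2) ≤ 2 * A2 (K+1))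
    {K' : ℕ} (hK'e : K' % 2 = 0)
    (hfK' : f K' % 2 = 1) (hgK' : g K' % 2 = 1)
    (hxK' : xiSeq f g 1 1 d K' ≠ -1)
    (hI1 : pmult f (f 0) ≤ K'+1) (hI2 : pmult g (g 0) ≤ K'+1)
    (hT : ∑ j ∈ Finset.range (K'+1), xiSeq f g 1 1 d j = 0) :
    ∑ j ∈ Finset.range (K'+1), w j ≤ A1 (K'+1) + A2 (K'+1) := by
  -- constancy across K' → K'+1
  have hdyn : f (K'+1) + g (K'+1) = f K' + g K' := by
    by_contra hne
    have h1 : f (K'+1) ≤ f K' := hf (by omega : K' ≤ K'+1)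
    have h2 : g (K'+1) ≤ g K' := hg (by omega : K' ≤ K'+1)
    exact hxK' (xi_neg_of f g hd hK'e hfK' hgK' (by omega))
  obtain ⟨hfc, hgc⟩ := const_of_sum_eq hf hg (by omega : K' ≤ K'+1) hdyn.symm
  -- K' = 0 is impossible
  rcases Nat.eq_zero_or_pos K' with rfl | hK'0
  · exfalso
    have hb := max_mult_prefix hf hNf (by omega) 1
    have : ¬ (f 1 = f 0) := by
      rw [hb]
      omega
    have hfc' : f 0 = f 1 := hfc
    omega
  have hK'2 : 2 ≤ K' := by omega
  -- parity of prefix sums at K' and K'+2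
  have hoddK1f : f (K'+1) % 2 = 1 := by omega
  have hoddK1g : g (K'+1) % 2 = 1 := by omega
  have hSf2 : (∑ j ∈ Finset.range (K'+2), f j) % 2 = 0 := by
    have := even_prefix hpf hf0 (j := K'+1) (by omega) hoddK1f
    rw [show K'+1+1 = K'+2 from by ring] at this
    exact this
  have hSg2 : (∑ j ∈ Finset.range (K'+2), g j) % 2 = 0 := by
    have := even_prefix hpg hg0 (j := K'+1) (by omega) hoddK1g
    rw [show K'+1+1 = K'+2 from by ring] at this
    exact this
  obtain ⟨i, rfl⟩ : ∃ i, K' = 2*i+2 := ⟨(K'-2)/2, by omega⟩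
  have hSf0 : (∑ j ∈ Finset.range (2*i+2), f j) % 2 = 0 := by
    have hfo : f (2*i+1) % 2 = 1 := by
      have := hpf i
      omega
    have := even_prefix hpf hf0 (j := 2*i+1) (by omega) hfo
    rw [show 2*i+1+1 = 2*i+2 from by ring] at this
    exact this
  have hSg0 : (∑ j ∈ Finset.range (2*i+2), g j) % 2 = 0 := by
    have hgo : g (2*i+1) % 2 = 1 := by
      have := hpg i
      omega
    have := even_prefix hpg hg0 (j := 2*i+1) (by omega) hgo
    rw [show 2*i+1+1 = 2*i+2 from by ring] at this
    exact this
  -- lower bounds with parity boost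
  have l1f : ∑ j ∈ Finset.range (2*i+2), f j ≤ A1 (2*i+2) := by
    have hb := hA1lb (2*i+2)
    have hev := hA1ev (2*i+2) (by omega)
    split_ifs at hb <;> omega
  have l1g : ∑ j ∈ Finset.range (2*i+2), g j ≤ A2 (2*i+2) := by
    have hb := hA2lb (2*i+2)
    have hev := hA2ev (2*i+2) (by omega)
    split_ifs at hb <;> omega
  have l2f : ∑ j ∈ Finset.range (2*i+2+2), f j ≤ A1 (2*i+2+2) := by
    have hb := hA1lb (2*i+2+2)
    have hev := hA1ev (2*i+2+2) (by omega)
    rw [if_pos (by omega)] at hb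
    rw [show 2*i+2+2 = 2*i+2+1+1 from by ring] at *
    omega
  have l2g : ∑ j ∈ Finset.range (2*i+2+2), g j ≤ A2 (2*i+2+2) := by
    have hb := hA2lb (2*i+2+2)
    have hev := hA2ev (2*i+2+2) (by omega)
    rw [if_pos (by omega)] at hb
    rw [show 2*i+2+2 = 2*i+2+1+1 from by ring] at *
    omega
  have hcc1 := hA1cc (2*i+2)
  have hcc2 := hA2cc (2*i+2)
  -- sum decompositions
  have e1f : ∑ j ∈ Finset.range (2*i+2+1), f j
      = ∑ j ∈ Finset.range (2*i+2), f j + f (2*i+2) := Finset.sum_range_succ f _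
  have e1g : ∑ j ∈ Finset.range (2*i+2+1), g j
      = ∑ j ∈ Finset.range (2*i+2), g j + g (2*i+2) := Finset.sum_range_succ g _
  have e2f : ∑ j ∈ Finset.range (2*i+2+2), f j
      = ∑ j ∈ Finset.range (2*i+2+1), f j + f (2*i+2+1) := by
    rw [show 2*i+2+2 = (2*i+2+1)+1 from by ring]
    exact Finset.sum_range_succ f _
  have e2g : ∑ j ∈ Finset.range (2*i+2+2), g j
      = ∑ j ∈ Finset.range (2*i+2+1), g j + g (2*i+2+1) := by
    rw [show 2*i+2+2 = (2*i+2+1)+1 from by ring]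
    exact Finset.sum_range_succ g _
  have hcast := w_sum_cast hw (2*i+2+1)
  rw [hT] at hcast
  omega

end Master

section MasterMain
open Finset

variable {f g w : ℕ → ℕ} {d Nf Ng : ℕ} {A1 A2 : ℕ → ℕ}

lemma master (hf : Antitone f) (hg : Antitone g) (hd : d % 2 = 1)
    (hNf : ∀ j, Nf ≤ j → f j = 0) (hNg : ∀ j, Ng ≤ j → g j = 0)
    (hf0 : f 0 % 2 = 1) (hg0 : g 0 % 2 = 1)
    (hpf : ∀ i, f (2*i+1) % 2 = f (2*i+2) % 2)
    (hpg : ∀ i, g (2*i+1) % 2 = g (2*i+2) % 2)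
    (hw : ∀ j, (w j : ℤ) = wald f g 1 1 d j)
    (hA1lb : ∀ K, ∑ j ∈ Finset.range K, f j
        ≤ A1 K + (if pmult f (f 0) ≤ K then 1 else 0))
    (hA2lb : ∀ K, ∑ j ∈ Finset.range K, g j
        ≤ A2 K + (if pmult g (g 0) ≤ K then 1 else 0))
    (hA1ev : ∀ K, K % 2 = 0 → A1 K % 2 = 0) (hA2ev : ∀ K, K % 2 = 0 → A2 K % 2 = 0)
    (hA1cc : ∀ K, A1 K + A1 (K+2) ≤ 2 * A1 (K+1))
    (hA2cc : ∀ K, A2 K + A2 (K+2) ≤ 2 * A2 (K+1)) :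
    ∀ K, ∑ j ∈ Finset.range K, w j ≤ A1 K + A2 K + (if w K < w 0 then 1 else 0) := by
  intro K
  rcases Nat.eq_zero_or_pos K with rfl | hK
  · simp
  have hcast := w_sum_cast hw K
  have hb1 := hA1lb K
  have hb2 := hA2lb K
  rcases xi_invariant hf hg hd hf0 hg0 hpf hpg K with ⟨hT, hnE⟩ | ⟨hT, hE⟩
  swap
  · -- partial sum of ξ equals -1
    rw [hT] at hcast
    by_cases hI1 : pmult f (f 0) ≤ K <;> by_cases hI2 : pmult g (g 0) ≤ K
    · have hIW : w K < w 0 := w_lt_at_max hf hg hd hNf hNg hf0 hg0 hw hI1 hI2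
      rw [if_pos hIW]
      rw [if_pos hI1] at hb1
      rw [if_pos hI2] at hb2
      omega
    · rw [if_pos hI1] at hb1
      rw [if_neg hI2] at hb2
      split_ifs <;> omega
    · rw [if_neg hI1] at hb1
      rw [if_pos hI2] at hb2
      split_ifs <;> omega
    · rw [if_neg hI1] at hb1
      rw [if_neg hI2] at hb2
      split_ifs <;> omega
  · -- partial sum of ξ equals 0
    rw [hT] at hcast
    by_cases hEv : ∃ j < K, xiSeq f g 1 1 d j ≠ 0
    · -- at least one event happened
      obtain ⟨K', rfl⟩ : ∃ K', K = K'+1 := ⟨K-1, by omega⟩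
      have hsec : (f K' % 2 = 1 ∧ g K' % 2 = 1) ∧ xiSeq f g 1 1 d K' ≠ -1 := by
        by_contra hc
        apply hnE
        obtain ⟨j, hj1, hj2⟩ := hEv
        refine ⟨⟨j, by omega, hj2⟩, ?_⟩
        by_cases ho : f K' % 2 = 1 ∧ g K' % 2 = 1
        · right
          by_contra hx
          exact hc ⟨ho, hx⟩
        · exact Or.inl ho
      obtain ⟨⟨hfK', hgK'⟩, hxK'⟩ := hsec
      rcases Nat.even_or_odd K' with heK' | hoK'
      · -- K odd : direct or interpolation
        have heK'' : K' % 2 = 0 := by rwa [Nat.even_iff] at heK'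
        by_cases hI1 : pmult f (f 0) ≤ K'+1 <;> by_cases hI2 : pmult g (g 0) ≤ K'+1
        · have hint := interp_step hf hg hd hNf hNg hf0 hg0 hpf hpg hw hA1lb hA2lb
            hA1ev hA2ev hA1cc hA2cc heK'' hfK' hgK' hxK' hI1 hI2 hT
          split_ifs <;> omega
        · have hIW : w (K'+1) < w 0 :=
            w_lt_of_oddK hf hg hd hf0 hg0 hpf hpg hw (by omega) hT hEv
          rw [if_pos hIW]
          rw [if_pos hI1] at hb1
          rw [if_neg hI2] at hb2
          omega
        · have hIW : w (K'+1) < w 0 :=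
            w_lt_of_oddK hf hg hd hf0 hg0 hpf hpg hw (by omega) hT hEv
          rw [if_pos hIW]
          rw [if_neg hI1] at hb1
          rw [if_pos hI2] at hb2
          omega
        · rw [if_neg hI1] at hb1
          rw [if_neg hI2] at hb2
          split_ifs <;> omega
      · -- K even : parity boosts
        have hoK'' : K' % 2 = 1 := by rwa [Nat.odd_iff] at hoK'
        have hSf : (∑ j ∈ Finset.range (K'+1), f j) % 2 = 0 := even_prefix hpf hf0 hoK'' hfK'
        have hSg : (∑ j ∈ Finset.range (K'+1), g j) % 2 = 0 := even_prefix hpg hg0 hoK'' hgK'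
        have he1 := hA1ev (K'+1) (by omega)
        have he2 := hA2ev (K'+1) (by omega)
        split_ifs at hb1 hb2 ⊢ <;> omega
    · -- no events
      push_neg at hEv
      by_cases hI1 : pmult f (f 0) ≤ K <;> by_cases hI2 : pmult g (g 0) ≤ K
      · -- both multiplicities exceeded
        have hodd2 : f (K-1) % 2 = 1 ∧ g (K-1) % 2 = 1 := by
          rcases event_or_odd2 hf hg hd hf0 hg0 hpf hpg K hK with h | h
          · exact h
          · exfalso
            obtain ⟨j, hj, hje⟩ := h
            exact hje (hEv j hj)
        obtain ⟨K', rfl⟩ : ∃ K', K = K'+1 := ⟨K-1, by omega⟩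
        simp only [Nat.add_sub_cancel] at hodd2
        rcases Nat.even_or_odd K' with heK' | hoK'
        · -- K odd : interpolation
          have heK'' : K' % 2 = 0 := by rwa [Nat.even_iff] at heK'
          have hxK' : xiSeq f g 1 1 d K' ≠ -1 := by
            rw [hEv K' (by omega)]
            norm_num
          have hint := interp_step hf hg hd hNf hNg hf0 hg0 hpf hpg hw hA1lb hA2lb
            hA1ev hA2ev hA1cc hA2cc heK'' hodd2.1 hodd2.2 hxK' hI1 hI2 hT
          split_ifs <;> omega
        · -- K even : parity boosts
          have hoK'' : K' % 2 = 1 := by rwa [Nat.odd_iff] at hoK'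
          have hSf : (∑ j ∈ Finset.range (K'+1), f j) % 2 = 0 :=
            even_prefix hpf hf0 hoK'' hodd2.1
          have hSg : (∑ j ∈ Finset.range (K'+1), g j) % 2 = 0 :=
            even_prefix hpg hg0 hoK'' hodd2.2
          have he1 := hA1ev (K'+1) (by omega)
          have he2 := hA2ev (K'+1) (by omega)
          split_ifs at hb1 hb2 ⊢ <;> omega
      · have hIW : w K < w 0 :=
          w_lt_no_events hf hg hd hNf hNg hf0 hg0 hw hEv (Or.inl hI1)
        rw [if_pos hIW]
        rw [if_pos hI1] at hb1
        rw [if_neg hI2] at hb2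
        omega
      · have hIW : w K < w 0 :=
          w_lt_no_events hf hg hd hNf hNg hf0 hg0 hw hEv (Or.inr hI2)
        rw [if_pos hIW]
        rw [if_neg hI1] at hb1
        rw [if_pos hI2] at hb2
        omega
      · rw [if_neg hI1] at hb1
        rw [if_neg hI2] at hb2
        split_ifs <;> omega

end MasterMain

section Glue
open Finset

variable {lam ν : ℕ → ℕ} {N : ℕ}

lemma minusOne_tr_facts (hl : Antitone lam) (hN : ∀ j, N ≤ j → lam j = 0)
    (hl0 : 0 < lam 0) :
    0 < ptrans lam (lam 0 - 1) ∧ ptrans lam (lam 0) = 0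
      ∧ ptrans lam (lam 0 - 1) = pmult lam (lam 0) := by
  have h1 : 0 < ptrans lam (lam 0 - 1) := by
    have := (lt_ptrans_iff hl hN (lam 0 - 1) 0).1 (by omega)
    omega
  have h2 : ptrans lam (lam 0 - 1 + 1) = 0 := ptrans_supp hl hN _ (by omega)
  have h3 : pmult lam (lam 0 - 1 + 1) = ptrans lam (lam 0 - 1) - ptrans lam (lam 0 - 1 + 1) :=
    pmult_succ hl hN (lam 0 - 1)
  rw [show lam 0 - 1 + 1 = lam 0 from by omega] at h3
  rw [show lam 0 - 1 + 1 = lam 0 from by omega] at h2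
  exact ⟨h1, h2, by omega⟩

/-- Column-sum identity: columns of `(lamᵗ)⁻` and of `lam` differ by the indicator
of the maximal multiplicity. -/
lemma sum_tr_minusOne_tr (hl : Antitone lam) (hN : ∀ j, N ≤ j → lam j = 0)
    (hl0 : 0 < lam 0) (K : ℕ) :
    ∑ k ∈ Finset.range K, ptrans (minusOne (ptrans lam)) k
      + (if pmult lam (lam 0) ≤ K then 1 else 0) = ∑ k ∈ Finset.range K, lam k := by
  obtain ⟨h1, h2, h3⟩ := minusOne_tr_facts hl hN hl0
  have hμa : Antitone (ptrans lam) := ptrans_antitone hl hN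
  have hμs : ∀ k, lam 0 ≤ k → ptrans lam k = 0 := fun k hk => ptrans_supp hl hN k hk
  have h2' : ptrans lam (lam 0 - 1 + 1) = 0 := by
    rw [show lam 0 - 1 + 1 = lam 0 from by omega]
    exact h2

  have happ := ptrans_minusOne hμa hμs (j0 := lam 0 - 1) h1 h2'
  set mi := pmult lam (lam 0) with hmi
  have hmi1 : 0 < mi := by omega
  have hlammax : lam (mi - 1) = lam 0 :=
    (max_mult_prefix hl hN hl0 (mi - 1)).2 (by omega)
  have hpt : ∀ k, ptrans (minusOne (ptrans lam)) k + (if k = mi - 1 then 1 else 0) = lam k := by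
    intro k
    rw [happ k, ptrans_ptrans hl hN k, h3]
    rcases eq_or_ne k (mi - 1) with h | h
    · subst h
      rw [if_pos (by omega : mi - 1 + 1 = mi), if_pos rfl]
      omega
    · rw [if_neg (by omega : ¬ (k + 1 = mi)), if_neg h]
      omega
  have hsum : ∑ k ∈ Finset.range K,
      (ptrans (minusOne (ptrans lam)) k + (if k = mi - 1 then 1 else 0))
      = ∑ k ∈ Finset.range K, lam k :=
    Finset.sum_congr rfl (fun k _ => hpt k)
  rw [Finset.sum_add_distrib] at hsum
  have hite : ∑ k ∈ Finset.range K, (if k = mi - 1 then 1 else 0)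
      = (if mi ≤ K then 1 else 0) := by
    rw [Finset.sum_ite_eq' (Finset.range K) (mi - 1) (fun _ => 1)]
    simp only [Finset.mem_range]
    split_ifs <;> omega
  omega

lemma even_sum_pairs {a : ℕ → ℕ} (hpair : ∀ t, (a (2*t) + a (2*t+1)) % 2 = 0) :
    ∀ r, (∑ k ∈ Finset.range (2*r), a k) % 2 = 0 := by
  intro r
  induction r with
  | zero => simp
  | succ r ih =>
    have e1 : ∑ k ∈ Finset.range (2*(r+1)), a k
        = ∑ k ∈ Finset.range (2*r), a k + a (2*r) + (a (2*r+1)) := by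
      rw [show 2*(r+1) = (2*r+1)+1 from by ring, Finset.sum_range_succ,
        show 2*r+1 = (2*r)+1 from rfl, Finset.sum_range_succ]
    have := hpair r
    omega

/-- All the bounds needed about the transpose of the symplectic collapse. -/
lemma collapse_bounds {m : ℕ}
    (hl : Antitone lam) (hN : ∀ j, N ≤ j → lam j = 0) (hl0 : 0 < lam 0)
    (hsum : ∑ j ∈ Finset.range N, lam j = m + 1)
    (hνp : IsPartitionOf ν m) (hνs : IsSymplectic ν)
    (hdom : NDomLE ν (minusOne (ptrans lam))) :
    (∀ K, ∑ j ∈ Finset.range K, lam j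
        ≤ (∑ k ∈ Finset.range K, ptrans ν k) + (if pmult lam (lam 0) ≤ K then 1 else 0))
    ∧ (∀ K, K % 2 = 0 → (∑ k ∈ Finset.range K, ptrans ν k) % 2 = 0)
    ∧ (∀ K, (∑ k ∈ Finset.range K, ptrans ν k) + (∑ k ∈ Finset.range (K+2), ptrans ν k)
        ≤ 2 * ∑ k ∈ Finset.range (K+1), ptrans ν k) := by
  obtain ⟨hνa, Nν, hNν, hsν⟩ := hνp
  have hμp : IsPartitionOf (ptrans lam) (m+1) := ptrans_partition ⟨hl, N, hN, hsum⟩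
  obtain ⟨hf1, hf2, hf3⟩ := minusOne_tr_facts hl hN hl0
  have hf2' : ptrans lam (lam 0 - 1 + 1) = 0 := by
    rw [show lam 0 - 1 + 1 = lam 0 from by omega]
    exact hf2
  have hBp : IsPartitionOf (minusOne (ptrans lam)) m := by
    have := minusOne_partition hμp (j0 := lam 0 - 1) hf1 hf2'
    rw [show m + 1 - 1 = m from by omega] at this
    exact this
  have htr := tr_dom_of_dom ⟨hνa, Nν, hNν, hsν⟩ hBp hdom
  refine ⟨?_, ?_, ?_⟩
  · intro K
    have h1 := htr K
    have h2 := sum_tr_minusOne_tr hl hN hl0 K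
    omega
  · intro K hK
    obtain ⟨r, rfl⟩ : ∃ r, K = 2*r := ⟨K/2, by omega⟩
    apply even_sum_pairs
    intro t
    have hp : pmult ν (2*t+1) = ptrans ν (2*t) - ptrans ν (2*t+1) := pmult_succ hνa hNν (2*t)
    have hle : ptrans ν (2*t+1) ≤ ptrans ν (2*t) := ptrans_mono_succ hνa hNν (2*t)
    have hev := hνs (2*t+1) (by omega) ⟨t, by ring⟩
    rw [Nat.even_iff] at hev
    omega
  · intro K
    rw [show K + 2 = (K+1)+1 from rfl, Finset.sum_range_succ, Finset.sum_range_succ]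
    have hle : ptrans ν (K+1) ≤ ptrans ν K := ptrans_mono_succ hνa hNν K
    omega

end Glue

/-- type B.  `d₁ = 2n₁+1`, `d₂ = 2n₂+1`, `d = d₁+d₂−1 = 2n₁+2n₂+1`,
`λ₁, λ₂` special orthogonal partitions of `d₁, d₂`, `W = W(λ₁,λ₂)` with `ε₁ = ε₂ = 1`.
(i) `W` is an orthogonal partition of `d`;
(ii) if `ν₁, ν₂, ν` are C-collapses of `(λ₁ᵗ)⁻`, `(λ₂ᵗ)⁻`, `(Wᵗ)⁻` then `ν₁ ∪ ν₂ ≤ ν`;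
(iii) if moreover `η` is a B-collapse of `((ν₁ ∪ ν₂)ᵗ)⁺` then `W ≤ η`. -/
theorem stmt0 (n1 n2 : ℕ) (lam1 lam2 : ℕ → ℕ)
    (h1 : IsPartitionOf lam1 (2*n1+1)) (h1o : IsOrthogonal lam1)
    (h1s : IsOrthogonal (ptrans lam1))
    (h2 : IsPartitionOf lam2 (2*n2+1)) (h2o : IsOrthogonal lam2)
    (h2s : IsOrthogonal (ptrans lam2)) :
    (∃ w : ℕ → ℕ, (∀ j, (w j : ℤ) = wald lam1 lam2 1 1 (2*n1+2*n2+1) j) ∧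
        IsPartitionOf w (2*n1+2*n2+1) ∧ IsOrthogonal w) ∧
    (∀ w : ℕ → ℕ, (∀ j, (w j : ℤ) = wald lam1 lam2 1 1 (2*n1+2*n2+1) j) →
      ∀ ν1 ν2 ν : ℕ → ℕ,
        IsCCollapse (2*n1) (minusOne (ptrans lam1)) ν1 →
        IsCCollapse (2*n2) (minusOne (ptrans lam2)) ν2 →
        IsCCollapse (2*n1+2*n2) (minusOne (ptrans w)) ν →
        ∀ u : ℕ → ℕ, IsUnionOf u ν1 ν2 →
          NDomLE u ν ∧
          ∀ η : ℕ → ℕ, IsBCollapse (2*n1+2*n2+1) (plusOne (ptrans u)) η →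
            NDomLE w η) := by
  obtain ⟨hf, Nf, hNf, hsf⟩ := h1
  obtain ⟨hg, Ng, hNg, hsg⟩ := h2
  have hd : (2*n1+2*n2+1) % 2 = 1 := by omega
  have hpf := pairing_of_special hf hNf h1s
  have hpg := pairing_of_special hg hNg h2s
  have hf0 : lam1 0 % 2 = 1 := f0_odd_of_total_odd hNf hpf hsf (by omega)
  have hg0 : lam2 0 % 2 = 1 := f0_odd_of_total_odd hNg hpg hsg (by omega)
  have hwall : ∀ w : ℕ → ℕ, (∀ j, (w j : ℤ) = wald lam1 lam2 1 1 (2*n1+2*n2+1) j) →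
      IsPartitionOf w (2*n1+2*n2+1) ∧ IsOrthogonal w := by
    intro w hw
    constructor
    · refine ⟨w_antitone hf hg hd hw, max Nf Ng + 1,
        fun j hj => w_supp hd hw hNf hNg j (by omega), ?_⟩
      have := w_sum hf hg hd hf0 hg0 hpf hpg hNf hNg hw hsf hsg (max Nf Ng + 1) le_rfl
      omega
    · exact w_orthogonal hf hg hd hNf hNg hf0 hg0 hpf hpg h1o h2o
        (by rw [hsf]; omega) (by rw [hsg]; omega) hw
  constructor
  · refine ⟨fun j => (wald lam1 lam2 1 1 (2*n1+2*n2+1) j).toNat, ?_, ?_⟩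
    · intro j
      exact Int.toNat_of_nonneg (wald_nonneg hd j)
    · exact hwall _ (fun j => Int.toNat_of_nonneg (wald_nonneg hd j))
  · intro w hw ν1 ν2 ν hc1 hc2 hc u hu
    obtain ⟨hwp, hwo⟩ := hwall w hw
    have hwa : Antitone w := hwp.1
    have hw0 : 0 < w 0 := by
      by_contra hc0
      have hz : ∀ j, w j = 0 := by
        intro j
        have := hwa (Nat.zero_le j)
        omega
      obtain ⟨_, Nw, hNw, hsw⟩ := hwp
      rw [Finset.sum_eq_zero (fun j _ => hz j)] at hsw
      omega
    obtain ⟨hwa', Nw, hNw, hsw⟩ := hwp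
    -- bounds for the two collapses
    obtain ⟨hA1lb, hA1ev, hA1cc⟩ :=
      collapse_bounds (m := 2*n1) hf hNf (by omega) hsf hc1.1 hc1.2.1 hc1.2.2.1
    obtain ⟨hA2lb, hA2ev, hA2cc⟩ :=
      collapse_bounds (m := 2*n2) hg hNg (by omega) hsg hc2.1 hc2.2.1 hc2.2.2.1
    have hmaster := master hf hg hd hNf hNg hf0 hg0 hpf hpg hw
      (A1 := fun K => ∑ k ∈ Finset.range K, ptrans ν1 k)
      (A2 := fun K => ∑ k ∈ Finset.range K, ptrans ν2 k)
      hA1lb hA2lb hA1ev hA2ev hA1cc hA2cc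
    -- u is a symplectic partition of 2n1+2n2
    have hup : IsPartitionOf u (2*n1 + 2*n2) := union_partition hu hc1.1 hc2.1
    have hus : IsSymplectic u := union_symplectic hu hc1.2.1 hc2.2.1
    have hptu : ∀ k, ptrans u k = ptrans ν1 k + ptrans ν2 k :=
      ptrans_union hu hc1.1 hc2.1
    have hsumu : ∀ K, ∑ k ∈ Finset.range K, ptrans u k
        = (∑ k ∈ Finset.range K, ptrans ν1 k) + ∑ k ∈ Finset.range K, ptrans ν2 k := by
      intro K
      rw [← Finset.sum_add_distrib]
      exact Finset.sum_congr rfl (fun k _ => hptu k)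
    -- (Wᵗ)⁻ is a partition of 2n1+2n2
    have hμwp : IsPartitionOf (ptrans w) (2*n1+2*n2+1) := ptrans_partition ⟨hwa', Nw, hNw, hsw⟩
    obtain ⟨hwf1, hwf2, hwf3⟩ := minusOne_tr_facts hwa' hNw hw0
    have hwf2' : ptrans w (w 0 - 1 + 1) = 0 := by
      rw [show w 0 - 1 + 1 = w 0 from by omega]
      exact hwf2
    have hBp : IsPartitionOf (minusOne (ptrans w)) (2*n1+2*n2) := by
      have := minusOne_partition hμwp (j0 := w 0 - 1) hwf1 hwf2'
      rw [show 2*n1+2*n2+1 - 1 = 2*n1+2*n2 from by omega] at this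
      exact this
    -- the key dominance of transposes
    have hbr := max_mult_prefix hwa' hNw hw0
    have hdomtr : ∀ K, ∑ k ∈ Finset.range K, ptrans (minusOne (ptrans w)) k
        ≤ ∑ k ∈ Finset.range K, ptrans u k := by
      intro K
      rw [hsumu K]
      have e2 := sum_tr_minusOne_tr hwa' hNw hw0 K
      have e3 := hmaster K
      have hwKle : w K ≤ w 0 := hwa' (Nat.zero_le K)
      by_cases hKm : pmult w (w 0) ≤ K
      · rw [if_pos hKm] at e2
        have hlt : w K < w 0 := by
          have := hbr K
          omega
        rw [if_pos hlt] at e3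
        omega
      · rw [if_neg hKm] at e2
        have heq : w K = w 0 := (hbr K).2 (by omega)
        rw [if_neg (by omega : ¬ (w K < w 0))] at e3
        omega
    have hdomU : NDomLE u (minusOne (ptrans w)) := dom_of_tr_dom hup hBp hdomtr
    refine ⟨hc.2.2.2 u hup hus hdomU, ?_⟩
    intro η hη
    apply hη.2.2.2 w ⟨hwa', Nw, hNw, hsw⟩ hwo
    intro N
    rw [plusOne_sum]
    rw [hsumu N]
    have e3 := hmaster N
    rcases Nat.eq_zero_or_pos N with rfl | hN
    · simp
    · rw [if_pos (by omega : 1 ≤ N)]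
      split_ifs at e3 <;> omega
end

section
/- Let λ_1, λ_2 be weakly decreasing finitely supported sequences of natural numbers, ε_1, ε_2 ∈ {0,1}, and d ∈ ℕ. Let k > 0 satisfy k ≢ d (mod 2) and λ_{1,k} ≥ λ_{1,k+1} + 2, and let λ_1' be obtained from λ_1 by decreasing the first k entries by 2. Then the sequence ξ' formed from (λ_1', λ_2) with the data (ε_1, ε_2, d) equals the sequence ξ formed from (λ_1, λ_2) with the same data; consequently W(λ_1',λ_2)_j = W(λ_1,λ_2)_j − 2 for j ≤ k and W(λ_1',λ_2)_j = W(λ_1,λ_2)_j for j > k. -/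
/-- Decrease the first `k` parts of `f` by 2. -/
def stripTwo (f : ℕ → ℕ) (k : ℕ) : ℕ → ℕ := fun j => if j < k then f j - 2 else f j

/-- `λ₁, λ₂` weakly decreasing finitely supported, `ε₁, ε₂ ∈ {0,1}`,
`k > 0` with `k ≢ d (mod 2)` and `λ_{1,k} ≥ λ_{1,k+1}+2` (1-based).  If `λ₁'` is `λ₁`
with the first `k` entries decreased by 2, then `ξ' = ξ`, hence
`W(λ₁',λ₂)_j = W(λ₁,λ₂)_j − 2` for `j ≤ k` and `W(λ₁',λ₂)_j = W(λ₁,λ₂)_j` for `j > k`. -/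
theorem stmt15 (d k e1 e2 : ℕ) (lam1 lam2 : ℕ → ℕ)
    (h1a : Antitone lam1) (h1f : ∃ N, ∀ j, N ≤ j → lam1 j = 0)
    (h2a : Antitone lam2) (h2f : ∃ N, ∀ j, N ≤ j → lam2 j = 0)
    (he1 : e1 = 0 ∨ e1 = 1) (he2 : e2 = 0 ∨ e2 = 1)
    (hk : 0 < k) (hpar : k % 2 ≠ d % 2)
    (hstep : lam1 k + 2 ≤ lam1 (k-1)) :
    (∀ j, xiSeq (stripTwo lam1 k) lam2 e1 e2 d j = xiSeq lam1 lam2 e1 e2 d j) ∧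
    (∀ j, j < k →
      wald (stripTwo lam1 k) lam2 e1 e2 d j = wald lam1 lam2 e1 e2 d j - 2) ∧
    (∀ j, k ≤ j →
      wald (stripTwo lam1 k) lam2 e1 e2 d j = wald lam1 lam2 e1 e2 d j) := by
  have h2 : ∀ j, j < k → 2 ≤ lam1 j := by
    intro j hj
    have := h1a (show j ≤ k - 1 by omega)
    omega
  have hxi : ∀ j, xiSeq (stripTwo lam1 k) lam2 e1 e2 d j = xiSeq lam1 lam2 e1 e2 d j := by
    intro j
    have hsL : ∀ m, m < k → stripTwo lam1 k m = lam1 m - 2 := fun m hm => if_pos hm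
    have hsG : ∀ m, k ≤ m → stripTwo lam1 k m = lam1 m := fun m hm => if_neg (by omega)
    simp only [xiSeq]
    rcases lt_trichotomy j k with hj | hj | hj
    · have h2j := h2 j hj
      have h2jm : 2 ≤ lam1 (j - 1) := h2 (j - 1) (by omega)
      rw [hsL j hj, hsL (j - 1) (by omega)]
      rcases Nat.lt_or_ge (j + 1) k with hj1 | hj1
      · have h2j1 := h2 (j + 1) hj1
        rw [hsL (j + 1) hj1]
        split_ifs <;> omega
      · have hj1' : j + 1 = k := by omega
        rw [hsG (j + 1) hj1]
        split_ifs <;> omega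
    · have h2jm : 2 ≤ lam1 (j - 1) := h2 (j - 1) (by omega)
      rw [hsG j (by omega), hsL (j - 1) (by omega), hsG (j + 1) (by omega)]
      split_ifs <;> omega
    · rw [hsG j (by omega), hsG (j - 1) (by omega), hsG (j + 1) (by omega)]
  refine ⟨hxi, ?_, ?_⟩
  · intro j hj
    have h2j := h2 j hj
    simp only [wald, hxi, stripTwo, if_pos hj]
    have h' : ((lam1 j - 2 : ℕ) : ℤ) = (lam1 j : ℤ) - 2 := by omega
    rw [h']; ring
  · intro j hj
    simp only [wald, hxi, stripTwo, if_neg (show ¬ j < k by omega)]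
end
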